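/- arXiv:1311.0191 — 4 statements merged into one kernel-verified Lean document; each statement's English description precedes it below -/
import Mathlib

section
/- Let f be a Fibonacci map. Then for every n ≥ 0, |c_{S_n}| > |c_{S_{n+1}}|, i.e. the distance from f^{S_n}(c) to the critical point c is strictly greater than the distance from f^{S_{n+1}}(c) to c. -/
noncomputable section

/-- The Fibonacci numbers `S 0 = 1`, `S 1 = 2`, `S (k+2) = S (k+1) + S k`. -/
def fibS : ℕ → ℕ
  | 0 => 1
  | 1 => 2
  | n + 2 => fibS (n + 1) + fibS n

/-- `f : [0,1] → [0,1]` is unimodal with critical point `c`: continuous, maps `[0,1]` into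
itself, `f 0 = f 1 = 0`, `c ∈ (0,1)`, strictly increasing on `[0,c]`, strictly decreasing
on `[c,1]`. -/
def IsUnimodal (f : ℝ → ℝ) (c : ℝ) : Prop :=
  ContinuousOn f (Set.Icc 0 1) ∧ Set.MapsTo f (Set.Icc 0 1) (Set.Icc 0 1) ∧
  f 0 = 0 ∧ f 1 = 0 ∧ c ∈ Set.Ioo (0 : ℝ) 1 ∧
  StrictMonoOn f (Set.Icc 0 c) ∧ StrictAntiOn f (Set.Icc c 1)

/-- `f` is symmetric about `c`: `f (2c - x) = f x` whenever both points lie in `[0,1]`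
(the symmetric point of `x` is `x̂ = 2c - x`). -/
def SymmetricAbout (f : ℝ → ℝ) (c : ℝ) : Prop :=
  ∀ x ∈ Set.Icc (0 : ℝ) 1, 2 * c - x ∈ Set.Icc (0 : ℝ) 1 → f (2 * c - x) = f x

/-- The distance from `c` to a nearest `k`-th preimage `c₋ₖ` of `c` in `[0,1]`,
i.e. `|c₋ₖ - c| = |c₋ₖ|`. -/
def preimDist (f : ℝ → ℝ) (c : ℝ) (k : ℕ) : ℝ :=
  sInf ((fun x => |x - c|) '' {x | x ∈ Set.Icc (0 : ℝ) 1 ∧ f^[k] x = c})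

/-- `S` is the sequence of cutting times of `f`: `S 0 = 1`, and `S (i+1)` is the least
`k ≥ S i` for which the nearest `k`-th preimage `c₋ₖ` of `c` lies in the symmetric open
interval `(c₋ₛᵢ, (c₋ₛᵢ)^)`, i.e. `c₋ₖ` exists and is strictly closer to `c` than `c₋ₛᵢ`. -/
def IsCuttingSeq (f : ℝ → ℝ) (c : ℝ) (S : ℕ → ℕ) : Prop :=
  S 0 = 1 ∧ ∀ i, IsLeast {k | S i ≤ k ∧
    ({x | x ∈ Set.Icc (0 : ℝ) 1 ∧ f^[k] x = c}).Nonempty ∧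
    preimDist f c k < preimDist f c (S i)} (S (i + 1))

/-- A Fibonacci map: a symmetric unimodal map whose cutting times are exactly the
Fibonacci numbers `1, 2, 3, 5, 8, …`. -/
def IsFibonacciMap (f : ℝ → ℝ) (c : ℝ) : Prop :=
  IsUnimodal f c ∧ SymmetricAbout f c ∧ IsCuttingSeq f c fibS

namespace FibAux

open Set Function

lemma fibS_zero : fibS 0 = 1 := rfl
lemma fibS_one : fibS 1 = 2 := rfl
lemma fibS_add_two (n : ℕ) : fibS (n + 2) = fibS (n + 1) + fibS n := rfl

lemma fibS_pos : ∀ n, 0 < fibS n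
  | 0 => one_pos
  | 1 => two_pos
  | n + 2 => by
      have h1 := fibS_pos (n + 1)
      rw [fibS_add_two]; omega

lemma fibS_lt_succ : ∀ n, fibS n < fibS (n + 1)
  | 0 => by norm_num [fibS_zero, fibS_one]
  | n + 1 => by
      have := fibS_pos n
      rw [fibS_add_two]; omega

variable {f : ℝ → ℝ} {c : ℝ}

/-- the set of `k`-th preimages of `c` in `[0,1]` -/
def pre (f : ℝ → ℝ) (c : ℝ) (k : ℕ) : Set ℝ :=
  {x | x ∈ Set.Icc (0 : ℝ) 1 ∧ f^[k] x = c}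

lemma preimDist_def (k : ℕ) :
    preimDist f c k = sInf ((fun x => |x - c|) '' pre f c k) := rfl

lemma mapsTo_iter (hu : IsUnimodal f c) (k : ℕ) :
    MapsTo (f^[k]) (Icc 0 1) (Icc 0 1) := hu.2.1.iterate k

lemma contOn_iter (hu : IsUnimodal f c) (k : ℕ) :
    ContinuousOn (f^[k]) (Icc 0 1) := by
  induction k with
  | zero => simpa using continuousOn_id
  | succ k ih =>
      rw [Function.iterate_succ']
      exact hu.1.comp ih (mapsTo_iter hu k)

lemma isCompact_pre (hu : IsUnimodal f c) (k : ℕ) : IsCompact (pre f c k) := by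
  have h : pre f c k = Icc 0 1 ∩ (f^[k]) ⁻¹' {c} := by
    ext x; simp [pre]
  rw [h]
  exact isCompact_Icc.of_isClosed_subset
    ((contOn_iter hu k).preimage_isClosed_of_isClosed isClosed_Icc isClosed_singleton)
    inter_subset_left

lemma exists_nearest (hu : IsUnimodal f c) (k : ℕ) (hne : (pre f c k).Nonempty) :
    ∃ z, z ∈ pre f c k ∧ |z - c| = preimDist f c k := by
  have himg : IsCompact ((fun x => |x - c|) '' pre f c k) :=
    (isCompact_pre hu k).image ((continuous_id.sub continuous_const).abs)
  have hmem := himg.sInf_mem (hne.image _)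
  rw [← preimDist_def] at hmem
  obtain ⟨z, hz, hz'⟩ := hmem
  exact ⟨z, hz, hz'⟩

lemma preimDist_le {k : ℕ} {x : ℝ} (hx : x ∈ pre f c k) :
    preimDist f c k ≤ |x - c| := by
  apply csInf_le
  · exact ⟨0, fun y hy => by obtain ⟨w, _, rfl⟩ := hy; exact abs_nonneg _⟩
  · exact ⟨x, hx, rfl⟩

lemma preimDist_nonneg (k : ℕ) : 0 ≤ preimDist f c k := by
  apply Real.sInf_nonneg
  intro y hy; obtain ⟨w, _, rfl⟩ := hy; exact abs_nonneg _


lemma cut (hf : IsFibonacciMap f c) (i : ℕ) :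
    IsLeast {k | fibS i ≤ k ∧ (pre f c k).Nonempty ∧
      preimDist f c k < preimDist f c (fibS i)} (fibS (i + 1)) := hf.2.2.2 i

lemma dS_strict (hf : IsFibonacciMap f c) (i : ℕ) :
    preimDist f c (fibS (i + 1)) < preimDist f c (fibS i) := (cut hf i).1.2.2

lemma dS_pos (hf : IsFibonacciMap f c) (i : ℕ) : 0 < preimDist f c (fibS i) :=
  lt_of_le_of_lt (preimDist_nonneg _) (dS_strict hf i)

lemma pre_S_nonempty (hf : IsFibonacciMap f c) : ∀ i, (pre f c (fibS i)).Nonempty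
  | 0 => by
      by_contra h
      have : pre f c (fibS 0) = ∅ := Set.not_nonempty_iff_eq_empty.1 h
      have hd : preimDist f c (fibS 0) = 0 := by
        rw [preimDist_def, this, Set.image_empty, Real.sInf_empty]
      exact absurd hd (dS_pos hf 0).ne'
  | i + 1 => (cut hf i).1.2.1

lemma dS_anti (hf : IsFibonacciMap f c) {i j : ℕ} (h : i ≤ j) :
    preimDist f c (fibS j) ≤ preimDist f c (fibS i) := by
  induction j with
  | zero => simp_all
  | succ j ih =>
      rcases Nat.lt_or_ge i (j + 1) with h' | h'
      · exact le_trans (dS_strict hf j).le (ih (by omega))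
      · have : i = j + 1 := by omega
        subst this; rfl

lemma dS_le_d1 (hf : IsFibonacciMap f c) (i : ℕ) :
    preimDist f c (fibS i) ≤ preimDist f c 1 := dS_anti hf (Nat.zero_le i)

lemma hc01 (hf : IsFibonacciMap f c) : c ∈ Ioo (0:ℝ) 1 := hf.1.2.2.2.2.1

lemma c_mem_Icc (hf : IsFibonacciMap f c) : c ∈ Icc (0:ℝ) 1 :=
  ⟨(hc01 hf).1.le, (hc01 hf).2.le⟩

lemma f_c_gt (hf : IsFibonacciMap f c) : c < f c := by
  obtain ⟨x, hx01, hx⟩ := pre_S_nonempty hf 0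
  have hfx : f x = c := by simpa [fibS_zero] using hx
  have hle : c ≤ f c := by
    rcases le_total x c with h | h
    · have := (hf.1.2.2.2.2.2.1).monotoneOn ⟨hx01.1, h⟩
        ⟨(hc01 hf).1.le, le_rfl⟩ h
      linarith [this, hfx.symm.le]
    · have := (hf.1.2.2.2.2.2.2).antitoneOn ⟨le_rfl, (hc01 hf).2.le⟩
        ⟨h, hx01.2⟩ h
      linarith [this, hfx.symm.le]
  rcases eq_or_lt_of_le hle with h | h
  · exfalso
    have hcpre : c ∈ pre f c 1 := ⟨c_mem_Icc hf, by simpa using h.symm⟩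
    have := preimDist_le hcpre
    simp only [sub_self, abs_zero] at this
    have hpos : (0:ℝ) < preimDist f c 1 := dS_pos hf 0
    linarith
  · exact h

lemma d1_lt_c (hf : IsFibonacciMap f c) : preimDist f c 1 < c := by
  have h0c : ContinuousOn f (Icc 0 c) :=
    hf.1.1.mono (Icc_subset_Icc le_rfl (hc01 hf).2.le)
  have hmem : c ∈ Ioo (f 0) (f c) := by
    rw [hf.1.2.2.1]; exact ⟨(hc01 hf).1, f_c_gt hf⟩
  obtain ⟨z, hz, hfz⟩ := intermediate_value_Ioo (hc01 hf).1.le h0c hmem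
  have hzpre : z ∈ pre f c 1 :=
    ⟨⟨hz.1.le, hz.2.le.trans (hc01 hf).2.le⟩, by simpa using hfz⟩
  have := preimDist_le hzpre
  have habs : |z - c| = c - z := by rw [abs_of_nonpos (by linarith [hz.2])]; ring
  rw [habs] at this
  linarith [hz.1]

lemma d1_lt_one_sub (hf : IsFibonacciMap f c) : preimDist f c 1 < 1 - c := by
  have h1c : ContinuousOn f (Icc c 1) :=
    hf.1.1.mono (Icc_subset_Icc (hc01 hf).1.le le_rfl)
  have hmem : c ∈ Ioo (f 1) (f c) := by
    rw [hf.1.2.2.2.1]; exact ⟨(hc01 hf).1, f_c_gt hf⟩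
  obtain ⟨z, hz, hfz⟩ := intermediate_value_Ioo' (hc01 hf).2.le h1c hmem
  have hzpre : z ∈ pre f c 1 :=
    ⟨⟨(hc01 hf).1.le.trans hz.1.le, hz.2.le⟩, by simpa using hfz⟩
  have := preimDist_le hzpre
  have habs : |z - c| = z - c := abs_of_nonneg (by linarith [hz.1])
  rw [habs] at this
  linarith [hz.2]

lemma ball_subset (hf : IsFibonacciMap f c) {x : ℝ}
    (h : |x - c| ≤ preimDist f c 1) : x ∈ Icc (0:ℝ) 1 := by
  have h1 := d1_lt_c hf
  have h2 := d1_lt_one_sub hf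
  have := abs_le.1 h
  constructor <;> [linarith [this.1]; linarith [this.2]]

lemma mirror (hf : IsFibonacciMap f c) {x : ℝ} {k : ℕ} (hk : 1 ≤ k)
    (hx : x ∈ pre f c k) (hx' : 2 * c - x ∈ Icc (0:ℝ) 1) :
    (2 * c - x) ∈ pre f c k := by
  obtain ⟨m, rfl⟩ : ∃ m, k = m + 1 := ⟨k - 1, by omega⟩
  refine ⟨hx', ?_⟩
  rw [Function.iterate_succ_apply, hf.2.1 x hx.1 hx',
    ← Function.iterate_succ_apply]
  exact hx.2

lemma low_order_far (hf : IsFibonacciMap f c) :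
    ∀ n, ∀ j x, 1 ≤ j → j < fibS (n + 1) → x ∈ pre f c j →
      preimDist f c (fibS n) ≤ |x - c| := by
  intro n
  induction n with
  | zero =>
      intro j x h1 h2 hx
      have hj : j = 1 := by rw [fibS_one] at h2; omega
      subst hj
      exact preimDist_le hx
  | succ n ih =>
      intro j x h1 h2 hx
      rcases Nat.lt_or_ge j (fibS (n + 1)) with h | h
      · exact le_trans (dS_strict hf n).le (ih j x h1 h hx)
      · have hnot : j ∉ {k | fibS (n + 1) ≤ k ∧ (pre f c k).Nonempty ∧
            preimDist f c k < preimDist f c (fibS (n + 1))} := by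
          intro hmem
          have := (cut hf (n + 1)).2 hmem
          omega
        have hge : preimDist f c (fibS (n + 1)) ≤ preimDist f c j := by
          by_contra hlt
          exact hnot ⟨h, ⟨x, hx⟩, by linarith⟩
        exact le_trans hge (preimDist_le hx)


lemma abs_le_uIcc {a y z : ℝ} (h : y ∈ uIcc a z) : |y - a| ≤ |z - a| := by
  rcases Set.mem_uIcc.1 h with ⟨h1, h2⟩ | ⟨h1, h2⟩
  · rw [abs_of_nonneg (by linarith), abs_of_nonneg (by linarith)]; linarith
  · rw [abs_of_nonpos (by linarith), abs_of_nonpos (by linarith)]; linarith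

lemma abs_lt_uIcc {a y z : ℝ} (h : y ∈ uIcc a z) (hne : y ≠ z) :
    |y - a| < |z - a| := by
  rcases Set.mem_uIcc.1 h with ⟨h1, h2⟩ | ⟨h1, h2⟩
  · have : y < z := lt_of_le_of_ne h2 hne
    rw [abs_of_nonneg (by linarith), abs_of_nonneg (by linarith)]; linarith
  · have : z < y := lt_of_le_of_ne h1 (Ne.symm hne)
    rw [abs_of_nonpos (by linarith), abs_of_nonpos (by linarith)]; linarith

/-- a nearest `fibS i`-th preimage of `c` can be chosen on the same side of `c`
as any point `t` that is strictly farther from `c`. -/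
lemma nearest_side (hf : IsFibonacciMap f c) (i : ℕ) {t : ℝ}
    (ht : preimDist f c (fibS i) < |t - c|) :
    ∃ z, z ∈ pre f c (fibS i) ∧ |z - c| = preimDist f c (fibS i) ∧
      z ∈ uIcc c t ∧ z ≠ c ∧ z ≠ t := by
  obtain ⟨z₀, hz₀, hd⟩ := exists_nearest hf.1 _ (pre_S_nonempty hf i)
  have hdpos : 0 < preimDist f c (fibS i) := dS_pos hf i
  have hd1 := dS_le_d1 hf i
  have hz₀ne : z₀ ≠ c := by
    intro h; rw [h, sub_self, abs_zero] at hd; exact hdpos.ne hd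
  have hmirIcc : 2 * c - z₀ ∈ Icc (0:ℝ) 1 := by
    apply ball_subset hf
    have : |2 * c - z₀ - c| = |z₀ - c| := by
      rw [show 2 * c - z₀ - c = -(z₀ - c) by ring, abs_neg]
    rw [this, hd]; exact hd1
  have hmir : (2 * c - z₀) ∈ pre f c (fibS i) :=
    mirror hf (fibS_pos i) hz₀ hmirIcc
  have hmird : |2 * c - z₀ - c| = preimDist f c (fibS i) := by
    rw [show 2 * c - z₀ - c = -(z₀ - c) by ring, abs_neg]; exact hd
  rcases lt_or_gt_of_ne hz₀ne with hlt | hgt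
  · -- z₀ < c
    rcases le_or_gt t c with htc | htc
    · -- t < c : use z₀
      have htlt : t < c := by
        rcases eq_or_lt_of_le htc with h | h
        · exfalso; rw [h, sub_self, abs_zero] at ht; linarith
        · exact h
      have habs : |t - c| = c - t := by rw [abs_of_nonpos (by linarith)]; ring
      have hz₀d : c - z₀ = preimDist f c (fibS i) := by
        rw [← hd, abs_of_nonpos (by linarith)]; ring
      refine ⟨z₀, hz₀, hd, ?_, hz₀ne, ?_⟩
      · rw [Set.mem_uIcc]; right
        constructor <;> [linarith [habs ▸ ht]; linarith]
      · intro h; rw [h] at hz₀d; rw [habs] at ht; linarith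
    · -- t > c : use mirror
      have habs : |t - c| = t - c := abs_of_nonneg (by linarith)
      have hmd : (2 * c - z₀) - c = preimDist f c (fibS i) := by
        rw [← hmird, abs_of_nonneg (by linarith)]
      refine ⟨2 * c - z₀, hmir, hmird, ?_, by intro h; rw [h] at hmd; simp at hmd; linarith, ?_⟩
      · rw [Set.mem_uIcc]; left
        constructor <;> [linarith; linarith [habs ▸ ht]]
      · intro h; rw [h] at hmd; rw [habs] at ht; linarith
  · -- z₀ > c
    rcases le_or_gt t c with htc | htc
    · have htlt : t < c := by
        rcases eq_or_lt_of_le htc with h | h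
        · exfalso; rw [h, sub_self, abs_zero] at ht; linarith
        · exact h
      have habs : |t - c| = c - t := by rw [abs_of_nonpos (by linarith)]; ring
      have hmd : c - (2 * c - z₀) = preimDist f c (fibS i) := by
        rw [← hmird, abs_of_nonpos (by linarith)]; ring
      refine ⟨2 * c - z₀, hmir, hmird, ?_, by intro h; rw [h] at hmd; simp at hmd; linarith, ?_⟩
      · rw [Set.mem_uIcc]; right
        constructor <;> [linarith [habs ▸ ht]; linarith]
      · intro h; rw [h] at hmd; rw [habs] at ht; linarith
    · have habs : |t - c| = t - c := abs_of_nonneg (by linarith)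
      have hz₀d : z₀ - c = preimDist f c (fibS i) := by
        rw [← hd, abs_of_nonneg (by linarith)]
      refine ⟨z₀, hz₀, hd, ?_, hz₀ne, ?_⟩
      · rw [Set.mem_uIcc]; left
        constructor <;> [linarith; linarith [habs ▸ ht]]
      · intro h; rw [h] at hz₀d; rw [habs] at ht; linarith


/-- monotone branch lemma: if no point of `[c,z]` hits `c` at a positive time `< k`,
then `f^[k]` is strictly monotone or strictly antitone on `[c,z]`. -/
lemma branch (hu : IsUnimodal f c) :
    ∀ (k : ℕ) (z : ℝ), uIcc c z ⊆ Icc 0 1 →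
      (∀ j x, 0 < j → j < k → x ∈ uIcc c z → f^[j] x ≠ c) →
      StrictMonoOn (f^[k]) (uIcc c z) ∨ StrictAntiOn (f^[k]) (uIcc c z) := by
  intro k
  induction k with
  | zero =>
      intro z _ _
      left
      intro x _ y _ h
      simpa using h
  | succ k ih =>
      intro z hJ hno
      have hmono := ih z hJ (fun j x h1 h2 => hno j x h1 (h2.trans (Nat.lt_succ_self k)))
      have hside : (∀ x ∈ uIcc c z, f^[k] x ≤ c) ∨ (∀ x ∈ uIcc c z, c ≤ f^[k] x) := by
        rcases Nat.eq_zero_or_pos k with rfl | hk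
        · simp only [Function.iterate_zero, id_eq]
          rcases le_total z c with h | h
          · left; intro x hx
            rcases Set.mem_uIcc.1 hx with ⟨_, h2⟩ | ⟨_, h2⟩ <;> linarith
          · right; intro x hx
            rcases Set.mem_uIcc.1 hx with ⟨h1, _⟩ | ⟨h1, _⟩ <;> linarith
        · by_cases hle : ∀ x ∈ uIcc c z, f^[k] x ≤ c
          · exact Or.inl hle
          · right
            push_neg at hle
            obtain ⟨x₀, hx₀, hgt⟩ := hle
            intro x hx
            by_contra hlt
            push_neg at hlt
            have hsub : uIcc x x₀ ⊆ uIcc c z := Set.uIcc_subset_uIcc hx hx₀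
            have hcont : ContinuousOn (f^[k]) (uIcc x x₀) :=
              (contOn_iter hu k).mono (hsub.trans hJ)
            have hcmem : c ∈ uIcc (f^[k] x) (f^[k] x₀) := by
              rw [Set.mem_uIcc]; left; exact ⟨hlt.le, hgt.le⟩
            obtain ⟨ξ, hξ, hξc⟩ := intermediate_value_uIcc hcont hcmem
            exact hno k ξ hk (Nat.lt_succ_self k) (hsub hξ) hξc
      rw [Function.iterate_succ']
      rcases hside with hs | hs
      · have hmt : MapsTo (f^[k]) (uIcc c z) (Icc 0 c) :=
          fun x hx => ⟨((mapsTo_iter hu k) (hJ hx)).1, hs x hx⟩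
        rcases hmono with hm | hm
        · exact Or.inl ((hu.2.2.2.2.2.1).comp hm hmt)
        · exact Or.inr ((hu.2.2.2.2.2.1).comp_strictAntiOn hm hmt)
      · have hmt : MapsTo (f^[k]) (uIcc c z) (Icc c 1) :=
          fun x hx => ⟨hs x hx, ((mapsTo_iter hu k) (hJ hx)).2⟩
        rcases hmono with hm | hm
        · exact Or.inr ((hu.2.2.2.2.2.2).comp_strictMonoOn hm hmt)
        · exact Or.inl ((hu.2.2.2.2.2.2).comp hm hmt)


/-- Lower bound: `|c_{S_n}| > d(S_{n+1} - S_n)`. -/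
lemma lower (hf : IsFibonacciMap f c) (n : ℕ) :
    preimDist f c (fibS (n + 1) - fibS n) < |f^[fibS n] c - c| := by
  obtain ⟨z, hz, hzd⟩ := exists_nearest hf.1 _ (pre_S_nonempty hf n)
  have h2 : preimDist f c (fibS (n + 1)) < |z - c| := by
    rw [hzd]; exact dS_strict hf n
  obtain ⟨z', hz', hz'd, hz'mem, hz'nec, hz'nez⟩ := nearest_side hf (n + 1) h2
  have hJ : uIcc c z ⊆ Icc 0 1 := fun x hx => by
    apply ball_subset hf
    exact le_trans (abs_le_uIcc hx) (hzd ▸ dS_le_d1 hf n)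
  have hno : ∀ j x, 0 < j → j < fibS n → x ∈ uIcc c z → f^[j] x ≠ c := by
    intro j x hj hjk hx hcx
    have hxpre : x ∈ pre f c j := ⟨hJ hx, hcx⟩
    cases n with
    | zero => rw [fibS_zero] at hjk; omega
    | succ m =>
        have h3 := low_order_far hf m j x hj hjk hxpre
        have h4 : |x - c| ≤ |z - c| := abs_le_uIcc hx
        have h5 := dS_strict hf m
        rw [hzd] at h4
        linarith
  have hfz : f^[fibS n] z = c := hz.2
  set u := f^[fibS n] c with hu
  set w := f^[fibS n] z' with hw
  -- w is strictly between u and c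
  have key : (u < w ∧ w < c) ∨ (c < w ∧ w < u) := by
    have hcz : c ∈ uIcc c z := Set.left_mem_uIcc
    have hzz : z ∈ uIcc c z := Set.right_mem_uIcc
    rcases branch hf.1 (fibS n) z hJ hno with hM | hM
    · rcases Set.mem_uIcc.1 hz'mem with ⟨h1, h2⟩ | ⟨h1, h2⟩
      · have e1 := hM hcz hz'mem (lt_of_le_of_ne h1 (Ne.symm hz'nec))
        have e2 := hM hz'mem hzz (lt_of_le_of_ne h2 hz'nez)
        rw [hfz] at e2
        exact Or.inl ⟨e1, e2⟩
      · have e1 := hM hzz hz'mem (lt_of_le_of_ne h1 (Ne.symm hz'nez))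
        have e2 := hM hz'mem hcz (lt_of_le_of_ne h2 hz'nec)
        rw [hfz] at e1
        exact Or.inr ⟨e1, e2⟩
    · rcases Set.mem_uIcc.1 hz'mem with ⟨h1, h2⟩ | ⟨h1, h2⟩
      · have e1 := hM hcz hz'mem (lt_of_le_of_ne h1 (Ne.symm hz'nec))
        have e2 := hM hz'mem hzz (lt_of_le_of_ne h2 hz'nez)
        rw [hfz] at e2
        exact Or.inr ⟨e2, e1⟩
      · have e1 := hM hzz hz'mem (lt_of_le_of_ne h1 (Ne.symm hz'nez))
        have e2 := hM hz'mem hcz (lt_of_le_of_ne h2 hz'nec)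
        rw [hfz] at e1
        exact Or.inl ⟨e2, e1⟩
  have hwlt : |w - c| < |u - c| := by
    rcases key with ⟨h1, h2⟩ | ⟨h1, h2⟩
    · rw [abs_of_neg (by linarith), abs_of_neg (by linarith)]; linarith
    · rw [abs_of_pos (by linarith), abs_of_pos (by linarith)]; linarith
  have hwpre : w ∈ pre f c (fibS (n + 1) - fibS n) := by
    refine ⟨(mapsTo_iter hf.1 (fibS n)) hz'.1, ?_⟩
    have hadd : (fibS (n + 1) - fibS n) + fibS n = fibS (n + 1) :=
      Nat.sub_add_cancel (fibS_lt_succ n).le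
    calc f^[fibS (n + 1) - fibS n] w
        = f^[(fibS (n + 1) - fibS n) + fibS n] z' := by
          rw [Function.iterate_add_apply]
      _ = c := by rw [hadd]; exact hz'.2
  exact lt_of_le_of_lt (preimDist_le hwpre) hwlt

/-- Upper bound: `|c_{S_{n+2}}| ≤ d(S_n)`. -/
lemma upper (hf : IsFibonacciMap f c) (n : ℕ) :
    |f^[fibS (n + 2)] c - c| ≤ preimDist f c (fibS n) := by
  by_contra hcon
  push_neg at hcon
  obtain ⟨zs, hzs, hzsd, hzsmem, hzsnec, hzsnet⟩ := nearest_side hf n hcon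
  obtain ⟨z, hz, hzd⟩ := exists_nearest hf.1 _ (pre_S_nonempty hf (n + 2))
  have hJ : uIcc c z ⊆ Icc 0 1 := fun x hx => by
    apply ball_subset hf
    exact le_trans (abs_le_uIcc hx) (hzd ▸ dS_le_d1 hf (n + 2))
  have hcont : ContinuousOn (f^[fibS (n + 2)]) (uIcc c z) :=
    (contOn_iter hf.1 _).mono hJ
  have himg : zs ∈ uIcc (f^[fibS (n + 2)] c) (f^[fibS (n + 2)] z) := by
    rw [hz.2, Set.uIcc_comm]
    exact hzsmem
  obtain ⟨y, hy, hyz⟩ := intermediate_value_uIcc hcont himg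
  have hynez : y ≠ z := by
    intro h
    rw [h, hz.2] at hyz
    exact hzsnec hyz.symm
  have hylt : |y - c| < |z - c| := abs_lt_uIcc hy hynez
  have hypre : y ∈ pre f c (fibS n + fibS (n + 2)) :=
    ⟨hJ hy, by rw [Function.iterate_add_apply, hyz]; exact hzs.2⟩
  have hmem : (fibS n + fibS (n + 2)) ∈ {k | fibS (n + 2) ≤ k ∧ (pre f c k).Nonempty ∧
      preimDist f c k < preimDist f c (fibS (n + 2))} := by
    refine ⟨le_add_self, ⟨y, hypre⟩, ?_⟩
    calc preimDist f c (fibS n + fibS (n + 2)) ≤ |y - c| := preimDist_le hypre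
      _ < |z - c| := hylt
      _ = preimDist f c (fibS (n + 2)) := hzd
  have hle := (cut hf (n + 2)).2 hmem
  have h1 : fibS (n + 2 + 1) = fibS (n + 2) + fibS (n + 1) := rfl
  have h2 := fibS_lt_succ n
  omega

end FibAux

open FibAux

/-- If `f` is a Fibonacci map then for every `n ≥ 0`,
`|c_{S_n}| > |c_{S_{n+1}}|`, i.e. `|f^{S_n}(c) - c| > |f^{S_{n+1}}(c) - c|`. -/
theorem fibonacci_critical_orbit_dist_strict_anti (f : ℝ → ℝ) (c : ℝ)
    (hf : IsFibonacciMap f c) :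
    ∀ n : ℕ, |f^[fibS n] c - c| > |f^[fibS (n + 1)] c - c| := by
  intro n
  cases n with
  | succ n =>
      have hA := lower hf (n + 1)
      have heq : fibS (n + 1 + 1) - fibS (n + 1) = fibS n := by
        rw [fibS_add_two]; omega
      rw [heq] at hA
      exact lt_of_le_of_lt (upper hf n) hA
  | zero =>
      have hc1 := f_c_gt hf
      have hc01' := hc01 hf
      have hfc01 : f c ∈ Set.Icc (0:ℝ) 1 := hf.1.2.1 (c_mem_Icc hf)
      have hffc01 : f (f c) ∈ Set.Icc (0:ℝ) 1 := hf.1.2.1 hfc01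
      have e2 : f^[(2:ℕ)] c = f (f c) := by
        rw [show (2:ℕ) = 1 + 1 from rfl, Function.iterate_add_apply,
          Function.iterate_one]
      have e3 : f^[(3:ℕ)] c = f (f (f c)) := by
        rw [show (3:ℕ) = 1 + 2 from rfl, Function.iterate_add_apply,
          Function.iterate_one, e2]
      have hA0 : preimDist f c 1 < |f c - c| := by
        have h := lower hf 0
        simpa [fibS_zero, fibS_one] using h
      obtain ⟨w, hw, hwd, hwmem, hwnec, hwnet⟩ := nearest_side hf 0 (t := f c) hA0
      have hfw : f w = c := by
        have := hw.2
        simpa [fibS_zero] using this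
      have hwbd : c < w ∧ w < f c := by
        rcases Set.mem_uIcc.1 hwmem with ⟨h1, h2⟩ | ⟨h1, h2⟩
        · exact ⟨lt_of_le_of_ne h1 (Ne.symm hwnec), lt_of_le_of_ne h2 hwnet⟩
        · exfalso; linarith
      have hc2 : f (f c) < c := by
        have := hf.1.2.2.2.2.2.2 ⟨hwbd.1.le, hw.1.2⟩ ⟨hc1.le, hfc01.2⟩ hwbd.2
        rw [hfw] at this
        exact this
      by_contra hcon
      push_neg at hcon
      have hcon' : |f c - c| ≤ |f (f c) - c| := by
        simpa [fibS_zero, fibS_one, e2] using hcon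
      have habs1 : |f c - c| = f c - c := abs_of_pos (by linarith)
      have habs2 : |f (f c) - c| = c - f (f c) := by
        rw [abs_of_neg (by linarith)]; ring
      have hineq : f (f c) ≤ 2 * c - f c := by
        rw [habs1, habs2] at hcon'; linarith
      have hA1 : preimDist f c 1 < c - f (f c) := by
        have h := lower hf 1
        have heq1 : fibS (1 + 1) - fibS 1 = 1 := rfl
        rw [heq1] at h
        have heq2 : f^[fibS 1] c = f (f c) := by rw [fibS_one]; exact e2
        rw [heq2, habs2] at h
        exact h
      have hB0 : |f (f (f c)) - c| ≤ preimDist f c 1 := by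
        have h := upper hf 0
        have heq3 : fibS (0 + 2) = 3 := rfl
        rw [heq3, e3] at h
        exact h
      have hhat : 2 * c - f c ∈ Set.Icc (0:ℝ) 1 :=
        ⟨by linarith [hffc01.1], by linarith [hc01'.2]⟩
      have hsym : f (2 * c - f c) = f (f c) := hf.2.1 (f c) hfc01 hhat
      have hmono := (hf.1.2.2.2.2.2.1).monotoneOn
        ⟨hffc01.1, hc2.le⟩ ⟨by linarith [hffc01.1], by linarith⟩ hineq
      rw [hsym] at hmono
      have habs3 : c - f (f (f c)) ≤ |f (f (f c)) - c| := by
        rw [abs_sub_comm]; exact le_abs_self _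
      linarith
end
end

section
/- Let f be a Fibonacci map. Suppose positive integers m and m′ have Fibonacci sum expressions with leading (smallest-index) summands S_n and S_{n′} respectively. Then: (i) if n ≡ 1 or 2 (mod 4) then c_m < c, and if n ≡ 0 or 3 (mod 4) then c_m > c; (ii) if n < n′ and both n, n′ are ≡ 1 or 2 (mod 4), then c_m < c_{m′} < c; (iii) if n < n′ and both n, n′ are ≡ 0 or 3 (mod 4), then c < c_{m′} < c_m. (Here S_0 corresponds to residue 0.) -/
noncomputable section

/-- `l` is the Fibonacci sum expression of `m`: a nonempty list of indices
`k₁, k₂, …` with `k_{i+1} ≥ k_i + 2` for each `i`, with `S_{k₁} + S_{k₂} + ⋯ = m`.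
The leading summand is `fibS n` where `l.head? = some n`. -/
def IsFibExpansion (l : List ℕ) (m : ℕ) : Prop :=
  l ≠ [] ∧ l.Chain' (fun a b => a + 2 ≤ b) ∧ (l.map fibS).sum = m

namespace FibProof

/-! ### fibS arithmetic -/

lemma fibS_add_two (n : ℕ) : fibS (n + 2) = fibS (n + 1) + fibS n := rfl

lemma fibS_pos : ∀ n, 0 < fibS n
  | 0 => one_pos
  | 1 => two_pos
  | n + 2 => by rw [fibS_add_two]; exact Nat.add_pos_left (fibS_pos (n+1)) _

lemma fibS_lt_succ : ∀ n, fibS n < fibS (n + 1)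
  | 0 => by norm_num [fibS]
  | n + 1 => by
      rw [fibS_add_two]; exact Nat.lt_add_of_pos_right (fibS_pos n)

lemma fibS_strictMono : StrictMono fibS :=
  strictMono_nat_of_lt_succ fibS_lt_succ

lemma fibS_one_le (n : ℕ) : 1 ≤ fibS n := fibS_pos n

lemma le_fibS (n : ℕ) : n + 1 ≤ fibS n := by
  induction n with
  | zero => simp [fibS]
  | succ k ih => have := fibS_lt_succ k; omega

lemma exists_fib_interval (j : ℕ) (hj : 1 ≤ j) : ∃ i, fibS i ≤ j ∧ j < fibS (i + 1) := by
  induction j with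
  | zero => omega
  | succ k ih =>
    rcases Nat.eq_or_lt_of_le hj with h1 | h2
    · exact ⟨0, by simp [fibS, ← h1]⟩
    · obtain ⟨i, hi1, hi2⟩ := ih (by omega)
      rcases Nat.lt_or_ge (k+1) (fibS (i+1)) with h | h
      · exact ⟨i, by omega, h⟩
      · have : k + 1 = fibS (i+1) := by omega
        exact ⟨i+1, by omega, by rw [this]; exact fibS_lt_succ _⟩


def Pre (f : ℝ → ℝ) (c : ℝ) (j : ℕ) : Set ℝ :=
  {x | x ∈ Set.Icc (0 : ℝ) 1 ∧ f^[j] x = c}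

def D (f : ℝ → ℝ) (c : ℝ) (k : ℕ) : ℝ := preimDist f c (fibS k)

variable {f : ℝ → ℝ} {c : ℝ}

lemma hcont (hf : IsFibonacciMap f c) : ContinuousOn f (Set.Icc 0 1) := hf.1.1
lemma hmaps (hf : IsFibonacciMap f c) : Set.MapsTo f (Set.Icc 0 1) (Set.Icc 0 1) := hf.1.2.1
lemma hf0 (hf : IsFibonacciMap f c) : f 0 = 0 := hf.1.2.2.1
lemma hf1 (hf : IsFibonacciMap f c) : f 1 = 0 := hf.1.2.2.2.1
lemma hc0 (hf : IsFibonacciMap f c) : 0 < c := hf.1.2.2.2.2.1.1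
lemma hc1 (hf : IsFibonacciMap f c) : c < 1 := hf.1.2.2.2.2.1.2
lemma hmono (hf : IsFibonacciMap f c) : StrictMonoOn f (Set.Icc 0 c) := hf.1.2.2.2.2.2.1
lemma hanti (hf : IsFibonacciMap f c) : StrictAntiOn f (Set.Icc c 1) := hf.1.2.2.2.2.2.2
lemma hsym (hf : IsFibonacciMap f c) : SymmetricAbout f c := hf.2.1
lemma hcut (hf : IsFibonacciMap f c) (i : ℕ) :
    IsLeast {k | fibS i ≤ k ∧ (Pre f c k).Nonempty ∧
      preimDist f c k < preimDist f c (fibS i)} (fibS (i + 1)) := hf.2.2.2 i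

lemma iter_maps (hf : IsFibonacciMap f c) (j : ℕ) :
    Set.MapsTo f^[j] (Set.Icc 0 1) (Set.Icc 0 1) := (hmaps hf).iterate j

lemma iter_cont (hf : IsFibonacciMap f c) (j : ℕ) : ContinuousOn f^[j] (Set.Icc 0 1) := by
  induction j with
  | zero => simpa using continuousOn_id
  | succ n ih =>
    have : ContinuousOn (f^[n] ∘ f) (Set.Icc 0 1) := ih.comp (hcont hf) (hmaps hf)
    simpa [Function.iterate_succ_apply, Function.comp] using this

lemma cmem (hf : IsFibonacciMap f c) : c ∈ Set.Icc (0:ℝ) 1 :=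
  ⟨le_of_lt (hc0 hf), le_of_lt (hc1 hf)⟩

lemma orbit_mem (hf : IsFibonacciMap f c) (m : ℕ) : f^[m] c ∈ Set.Icc (0:ℝ) 1 :=
  iter_maps hf m (cmem hf)

lemma pre_dist_le {j : ℕ} {x : ℝ} (hx : x ∈ Pre f c j) :
    preimDist f c j ≤ |x - c| := by
  apply csInf_le
  · exact ⟨0, by rintro y ⟨z, _, rfl⟩; exact abs_nonneg _⟩
  · exact ⟨x, hx, rfl⟩

lemma preim_nonneg (j : ℕ) : 0 ≤ preimDist f c j := by
  rcases Set.eq_empty_or_nonempty {x | x ∈ Set.Icc (0:ℝ) 1 ∧ f^[j] x = c} with h | h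
  · unfold preimDist; rw [h, Set.image_empty, Real.sInf_empty]
  · exact le_csInf (h.image _) (by rintro y ⟨z, _, rfl⟩; exact abs_nonneg _)

lemma pre_compact (hf : IsFibonacciMap f c) (j : ℕ) : IsCompact (Pre f c j) := by
  have hcl : IsClosed (Set.Icc (0:ℝ) 1 ∩ f^[j] ⁻¹' {c}) :=
    (iter_cont hf j).preimage_isClosed_of_isClosed isClosed_Icc isClosed_singleton
  have heq : Pre f c j = Set.Icc (0:ℝ) 1 ∩ f^[j] ⁻¹' {c} := by
    ext x
    simp [Pre, Set.mem_inter_iff, Set.mem_preimage, Set.mem_singleton_iff, Set.mem_setOf_eq]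
  rw [heq]
  exact (isCompact_Icc).of_isClosed_subset hcl Set.inter_subset_left

lemma pre_attain (hf : IsFibonacciMap f c) {j : ℕ} (hne : (Pre f c j).Nonempty) :
    ∃ z ∈ Pre f c j, |z - c| = preimDist f c j := by
  have hco : ContinuousOn (fun x => |x - c|) (Pre f c j) :=
    ((continuous_id.sub continuous_const).abs).continuousOn
  obtain ⟨z, hz, hmin⟩ := (pre_compact hf j).exists_isMinOn hne hco
  refine ⟨z, hz, ?_⟩
  have hleast : IsLeast ((fun x => |x - c|) '' (Pre f c j)) (|z - c|) := by
    constructor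
    · exact ⟨z, hz, rfl⟩
    · rintro y ⟨w, hw, rfl⟩; exact hmin hw
  exact (hleast.csInf_eq).symm

variable {f : ℝ → ℝ} {c : ℝ}

lemma cut_mem (hf : IsFibonacciMap f c) (i : ℕ) :
    (Pre f c (fibS (i+1))).Nonempty ∧ D f c (i+1) < D f c i := by
  have h := (hcut hf i).1
  exact ⟨h.2.1, h.2.2⟩

lemma D_succ_lt (hf : IsFibonacciMap f c) (i : ℕ) : D f c (i+1) < D f c i :=
  (cut_mem hf i).2

lemma pre_cut_nonempty (hf : IsFibonacciMap f c) (i : ℕ) :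
    (Pre f c (fibS i)).Nonempty := by
  cases i with
  | zero =>
    -- if (Pre f c 1) were empty, preimDist 1 = 0 and D 1 < 0 contradicts nonneg
    rcases Set.eq_empty_or_nonempty (Pre f c (fibS 0)) with h | h
    · exfalso
      have h0 : preimDist f c (fibS 0) = 0 := by
        unfold preimDist
        rw [show {x | x ∈ Set.Icc (0:ℝ) 1 ∧ f^[fibS 0] x = c} = Pre f c (fibS 0) from rfl,
          h, Set.image_empty, Real.sInf_empty]
      have := D_succ_lt hf 0
      rw [D, D, h0] at this
      exact absurd this (not_lt.mpr (preim_nonneg _))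
    · exact h
  | succ n => exact (cut_mem hf n).1

lemma D_pos (hf : IsFibonacciMap f c) (k : ℕ) : 0 < D f c k :=
  lt_of_le_of_lt (preim_nonneg _) (D_succ_lt hf k)

lemma D_anti (hf : IsFibonacciMap f c) {k l : ℕ} (h : k ≤ l) : D f c l ≤ D f c k := by
  induction l with
  | zero => simp [Nat.le_zero.mp h]
  | succ n ih =>
    rcases Nat.eq_or_lt_of_le h with h1 | h2
    · rw [h1]
    · exact le_trans (le_of_lt (D_succ_lt hf n)) (ih (by omega))

lemma D_anti_strict (hf : IsFibonacciMap f c) {k l : ℕ} (h : k < l) : D f c l < D f c k :=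
  lt_of_le_of_lt (D_anti hf h) (D_succ_lt hf k)

/-- The record lemma: any `j`-preimage with `1 ≤ j < fibS (k+1)` is at distance ≥ `D k`. -/
lemma record (hf : IsFibonacciMap f c) {j k : ℕ} (hj : 1 ≤ j) (hjk : j < fibS (k+1))
    {x : ℝ} (hx : x ∈ Pre f c j) : D f c k ≤ |x - c| := by
  obtain ⟨i, hi1, hi2⟩ := exists_fib_interval j hj
  have hik : i ≤ k := by
    by_contra hc'
    have : fibS (k+1) ≤ fibS i := fibS_strictMono.monotone (by omega)
    omega
  have hnot : fibS (i+1) ≤ j ∨ j ∉ {k | fibS i ≤ k ∧ (Pre f c k).Nonempty ∧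
      preimDist f c k < preimDist f c (fibS i)} := by
    by_cases hmem : j ∈ {k | fibS i ≤ k ∧ (Pre f c k).Nonempty ∧
      preimDist f c k < preimDist f c (fibS i)}
    · exact Or.inl ((hcut hf i).2 hmem)
    · exact Or.inr hmem
  have hge : preimDist f c (fibS i) ≤ preimDist f c j := by
    rcases hnot with h | h
    · omega
    · simp only [Set.mem_setOf_eq, not_and] at h
      have := h hi1 ⟨x, hx⟩
      linarith [this]
  calc D f c k ≤ D f c i := D_anti hf hik
    _ ≤ preimDist f c j := hge
    _ ≤ |x - c| := pre_dist_le hx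

lemma not_periodic (hf : IsFibonacciMap f c) {N : ℕ} (hN : 1 ≤ N) : f^[N] c ≠ c := by
  intro h
  have hx : c ∈ Pre f c N := ⟨cmem hf, h⟩
  have := record hf hN (lt_of_lt_of_le (by omega : N < N + 2) (le_fibS (N+1))) hx
  rw [sub_self, abs_zero] at this
  exact absurd (lt_of_lt_of_le (D_pos hf N) this) (lt_irrefl _)

lemma sym_iter (hf : IsFibonacciMap f c) {x : ℝ} (hx : x ∈ Set.Icc (0:ℝ) 1)
    (hx' : 2*c - x ∈ Set.Icc (0:ℝ) 1) {j : ℕ} (hj : 1 ≤ j) :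
    f^[j] (2*c - x) = f^[j] x := by
  obtain ⟨j', rfl⟩ : ∃ j', j = j' + 1 := ⟨j - 1, by omega⟩
  rw [Function.iterate_succ_apply, Function.iterate_succ_apply]
  rw [hsym hf x hx hx']

variable {f : ℝ → ℝ} {c : ℝ}

lemma iter_two (f : ℝ → ℝ) (x : ℝ) : f^[2] x = f (f x) := by
  rw [show (2:ℕ) = 1+1 from rfl, Function.iterate_add_apply]; rfl

lemma fc_mem (hf : IsFibonacciMap f c) : f c ∈ Set.Icc (0:ℝ) 1 := hmaps hf (cmem hf)

lemma fc_gt (hf : IsFibonacciMap f c) : c < f c := by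
  obtain ⟨z, hz⟩ := pre_cut_nonempty hf 0
  have hz1 : f z = c := by simpa [fibS] using hz.2
  have hfcne : f c ≠ c := by
    intro h
    exact not_periodic hf (le_refl 1) (by simpa using h)
  rcases lt_trichotomy z c with h | h | h
  · have := hmono hf ⟨hz.1.1, le_of_lt h⟩ ⟨le_of_lt (hc0 hf), le_refl c⟩ h
    rw [hz1] at this
    exact this
  · exact absurd (by rw [h] at hz1; exact hz1) hfcne
  · have := hanti hf ⟨le_refl c, le_of_lt (hc1 hf)⟩ ⟨le_of_lt h, hz.1.2⟩ h
    rw [hz1] at this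
    exact this

/-- the unique right 1-preimage z' -/
lemma exists_zR (hf : IsFibonacciMap f c) :
    ∃ z', c < z' ∧ z' ≤ 1 ∧ f z' = c ∧ (∀ x, c ≤ x → x ≤ 1 → f x = c → x = z') := by
  have h1 : c ∈ Set.Icc (f 1) (f c) := by
    rw [hf1 hf]; exact ⟨le_of_lt (hc0 hf), le_of_lt (fc_gt hf)⟩
  have hsub : Set.Icc c 1 ⊆ Set.Icc (0:ℝ) 1 :=
    Set.Icc_subset_Icc (le_of_lt (hc0 hf)) (le_refl 1)
  obtain ⟨z', hz'm, hz'⟩ := intermediate_value_Icc' (le_of_lt (hc1 hf))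
    ((hcont hf).mono hsub) h1
  have hzc : z' ≠ c := by
    intro h; rw [h] at hz'; exact absurd hz' (ne_of_gt (fc_gt hf))
  refine ⟨z', lt_of_le_of_ne hz'm.1 (Ne.symm hzc), hz'm.2, hz', ?_⟩
  intro x hx1 hx2 hx3
  exact (hanti hf).injOn ⟨hx1, hx2⟩ ⟨hz'm.1, hz'm.2⟩ (by rw [hx3, hz'])

lemma exists_xL (hf : IsFibonacciMap f c) :
    ∃ xL, 0 < xL ∧ xL < c ∧ f xL = c ∧ (∀ x, 0 ≤ x → x ≤ c → f x = c → x = xL) := by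
  have h1 : c ∈ Set.Icc (f 0) (f c) := by
    rw [hf0 hf]; exact ⟨le_of_lt (hc0 hf), le_of_lt (fc_gt hf)⟩
  have hsub : Set.Icc 0 c ⊆ Set.Icc (0:ℝ) 1 :=
    Set.Icc_subset_Icc (le_refl 0) (le_of_lt (hc1 hf))
  obtain ⟨xL, hxm, hx⟩ := intermediate_value_Icc (le_of_lt (hc0 hf))
    ((hcont hf).mono hsub) h1
  have hxc : xL ≠ c := by
    intro h; rw [h] at hx; exact absurd hx (ne_of_gt (fc_gt hf))
  have hx0 : xL ≠ 0 := by
    intro h; rw [h, hf0 hf] at hx; exact absurd hx.symm (ne_of_gt (hc0 hf))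
  refine ⟨xL, lt_of_le_of_ne hxm.1 (Ne.symm hx0), lt_of_le_of_ne hxm.2 hxc, hx, ?_⟩
  intro x hx1 hx2 hx3
  exact (hmono hf).injOn ⟨hx1, hx2⟩ ⟨hxm.1, hxm.2⟩ (by rw [hx3, hx])

/-- D 0 ≤ |x-c| for 1-preimages, and basic windows -/
lemma D0_le_pre1 (hf : IsFibonacciMap f c) {x : ℝ} (hx : x ∈ Set.Icc (0:ℝ) 1)
    (hfx : f x = c) : D f c 0 ≤ |x - c| :=
  pre_dist_le ⟨hx, by simpa [fibS] using hfx⟩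

lemma D0_lt_c (hf : IsFibonacciMap f c) : D f c 0 < c := by
  obtain ⟨xL, h0, h1, h2, _⟩ := exists_xL hf
  have := D0_le_pre1 hf ⟨le_of_lt h0, le_trans (le_of_lt h1) (le_of_lt (hc1 hf))⟩ h2
  rw [abs_of_neg (by linarith)] at this
  linarith

/-- Main initial lemma: `f^[2] c < c`, and `z' < f c`. -/
lemma gamma1_lt (hf : IsFibonacciMap f c) :
    f^[2] c < c ∧ (∀ z', c < z' → z' ≤ 1 → f z' = c → z' < f c) := by
  obtain ⟨z', hz1, hz2, hz3, hz4⟩ := exists_zR hf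
  obtain ⟨xL, hl1, hl2, hl3, hl4⟩ := exists_xL hf
  have hd0z : c + D f c 0 ≤ z' := by
    have := D0_le_pre1 hf ⟨le_trans (le_of_lt (hc0 hf)) (le_of_lt hz1), hz2⟩ hz3
    rw [abs_of_pos (by linarith)] at this; linarith
  have hd0x : D f c 0 ≤ c - xL := by
    have := D0_le_pre1 hf ⟨le_of_lt hl1, by linarith [hc1 hf]⟩ hl3
    rw [abs_of_neg (by linarith)] at this; linarith
  have key : f^[2] c < c := by
    by_contra hge
    push_neg at hge
    -- then f c ≤ z'
    have hfcz : f c ≤ z' := by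
      by_contra hgt
      push_neg at hgt
      have := hanti hf ⟨hz1.le, hz2⟩ ⟨by linarith [fc_gt hf], (fc_mem hf).2⟩ hgt
      rw [hz3] at this
      linarith [(iter_two f c) ▸ hge]
    -- z_1 : the 2-preimage at distance D 1 < D 0
    obtain ⟨z, hzP, hzd⟩ := pre_attain hf (pre_cut_nonempty hf 1)
    have hz2' : f^[2] z = c := by simpa [fibS] using hzP.2
    have hd10 : D f c 1 < D f c 0 := D_succ_lt hf 0
    have hzdlt : |z - c| < D f c 0 := by rw [hzd]; exact hd10
    have hfz_pre : f (f z) = c := by rw [← iter_two f z]; exact hz2'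
    have hzne : z ≠ c := by
      intro h; rw [h] at hz2'; exact not_periodic hf (by norm_num) hz2'
    have hfz_mem : f z ∈ Set.Icc (0:ℝ) 1 := hmaps hf ⟨hzP.1.1, hzP.1.2⟩
    rcases lt_trichotomy z c with h | h | h
    · -- z left: z > xL since |z-c| < D0 ≤ c - xL; f z > c so f z = z'; f z < f c ≤ z'
      have hzx : xL < z := by
        rw [abs_of_neg (by linarith)] at hzdlt
        linarith
      have hfz_gt : c < f z := by
        have := hmono hf ⟨hl1.le, hl2.le⟩ ⟨by linarith, h.le⟩ hzx
        rw [hl3] at this; exact this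
      have hfz_eq : f z = z' := hz4 (f z) hfz_gt.le hfz_mem.2 hfz_pre
      have : f z < f c := hmono hf ⟨by linarith, h.le⟩ ⟨(hc0 hf).le, le_refl c⟩ h
      linarith [hfz_eq ▸ this]
    · exact absurd h hzne
    · -- z right: z < z' since |z-c| < D0 ≤ z'-c; f z > c so = z'; but f z < f c ≤ z'
      have hzz : z < z' := by
        rw [abs_of_pos (by linarith)] at hzdlt
        linarith
      have hfz_gt : c < f z := by
        have := hanti hf ⟨h.le, hzP.1.2⟩ ⟨hz1.le, hz2⟩ hzz
        rw [hz3] at this; exact this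
      have hfz_eq : f z = z' := hz4 (f z) hfz_gt.le hfz_mem.2 hfz_pre
      have : f z < f c := hanti hf ⟨le_refl c, (hc1 hf).le⟩ ⟨by linarith, hzP.1.2⟩ h
      linarith [hfz_eq ▸ this]
  refine ⟨key, ?_⟩
  intro w hw1 hw2 hw3
  have hwz : w = z' := hz4 w hw1.le hw2 hw3
  subst hwz
  by_contra hge
  push_neg at hge
  have h2 : f^[2] c = f (f c) := iter_two f c
  rcases eq_or_lt_of_le hge with he | hlt
  · have : f^[2] c = c := by rw [h2, he, hz3]
    exact not_periodic hf (by norm_num) this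
  · have := hanti hf ⟨by linarith [fc_gt hf], (fc_mem hf).2⟩ ⟨hz1.le, hz2⟩ hlt
    rw [hz3] at this
    linarith [h2 ▸ key]

/-- window: c + D 0 < 1 and all mirror points are in [0,1] -/
lemma window (hf : IsFibonacciMap f c) : c + D f c 0 < f c ∧ c + D f c 0 < 1 := by
  obtain ⟨z', hz1, hz2, hz3, _⟩ := exists_zR hf
  have hd0z : c + D f c 0 ≤ z' := by
    have := D0_le_pre1 hf ⟨le_trans (le_of_lt (hc0 hf)) (le_of_lt hz1), hz2⟩ hz3
    rw [abs_of_pos (by linarith)] at this; linarith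
  have := (gamma1_lt hf).2 z' hz1 hz2 hz3
  exact ⟨by linarith, by linarith [(fc_mem hf).2]⟩

lemma mirror_mem (hf : IsFibonacciMap f c) {s : ℝ} (h0 : 0 ≤ s) (h1 : s ≤ D f c 0) :
    c + s ∈ Set.Icc (0:ℝ) 1 ∧ c - s ∈ Set.Icc (0:ℝ) 1 := by
  have h2 := (window hf).2
  have h3 := D0_lt_c hf
  have h4 := hc0 hf
  constructor
  · constructor <;> linarith
  · constructor <;> linarith

/-- symmetric version of iterated preimage: if x∈[0,1] with |x-c| ≤ D 0 and f^[j] x = c,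
then the point on the other side is also a j-preimage, in particular c+|x-c| is one. -/
lemma sym_pre (hf : IsFibonacciMap f c) {x : ℝ} (hx : x ∈ Set.Icc (0:ℝ) 1)
    (hd : |x - c| ≤ D f c 0) {j : ℕ} (hj : 1 ≤ j) :
    f^[j] (c + |x - c|) = f^[j] x := by
  rcases le_or_gt c x with h | h
  · rw [abs_of_nonneg (by linarith)]; congr 1; ring
  · rw [abs_of_neg (by linarith)]
    have h2 : c + -(x - c) = 2*c - x := by ring
    rw [h2]
    exact sym_iter hf hx (by
      have := (mirror_mem hf (by linarith : (0:ℝ) ≤ c - x) (by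
        rw [abs_of_neg (by linarith)] at hd; linarith)).1
      have h3 : c + (c - x) = 2*c - x := by ring
      rwa [h3] at this) hj

variable {f : ℝ → ℝ} {c : ℝ}

def MonoOrAnti (g : ℝ → ℝ) (s : Set ℝ) : Prop := StrictMonoOn g s ∨ StrictAntiOn g s

lemma mono_iter (hf : IsFibonacciMap f c) :
    ∀ (j : ℕ) (a b : ℝ), 0 ≤ a → a ≤ b → b ≤ 1 →
    (∀ x, a < x → x < b → ∀ i, i < j → f^[i] x ≠ c) →
    MonoOrAnti f^[j] (Set.Icc a b) := by
  intro j
  induction j with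
  | zero =>
    intro a b _ _ _ _
    left
    intro x _ y _ hxy
    simpa using hxy
  | succ j ih =>
    intro a b ha0 hab hb1 hfree
    have hnotc : ¬ (a < c ∧ c < b) := by
      rintro ⟨h1, h2⟩
      exact hfree c h1 h2 0 (by omega) rfl
    have hm1 : MonoOrAnti f (Set.Icc a b) := by
      rcases le_or_gt b c with h | h
      · exact Or.inl ((hmono hf).mono (Set.Icc_subset_Icc ha0 h))
      · have hca : c ≤ a := by
          by_contra h'
          exact hnotc ⟨lt_of_not_ge h', h⟩
        exact Or.inr ((hanti hf).mono (Set.Icc_subset_Icc hca hb1))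
    have hamem : a ∈ Set.Icc (0:ℝ) 1 := ⟨ha0, le_trans hab hb1⟩
    have hbmem : b ∈ Set.Icc (0:ℝ) 1 := ⟨le_trans ha0 hab, hb1⟩
    have hsub01 : Set.Icc a b ⊆ Set.Icc (0:ℝ) 1 := Set.Icc_subset_Icc ha0 hb1
    set A := min (f a) (f b) with hA
    set B := max (f a) (f b) with hB
    have hA0 : 0 ≤ A := le_min (hmaps hf hamem).1 (hmaps hf hbmem).1
    have hB1 : B ≤ 1 := max_le (hmaps hf hamem).2 (hmaps hf hbmem).2
    have hAB : A ≤ B := min_le_max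
    have hmapsJ : Set.MapsTo f (Set.Icc a b) (Set.Icc A B) := by
      intro x hx
      rcases hm1 with m1 | a1
      · exact ⟨le_trans (min_le_left _ _) (m1.monotoneOn ⟨le_refl a, hab⟩ hx hx.1),
          le_trans (m1.monotoneOn hx ⟨hab, le_refl b⟩ hx.2) (le_max_right _ _)⟩
      · exact ⟨le_trans (min_le_right _ _) (a1.antitoneOn hx ⟨hab, le_refl b⟩ hx.2),
          le_trans (a1.antitoneOn ⟨le_refl a, hab⟩ hx hx.1) (le_max_left _ _)⟩
    have hcf : ContinuousOn f (Set.Icc a b) := (hcont hf).mono hsub01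
    have hsurj : ∀ y, A < y → y < B → ∃ x, a < x ∧ x < b ∧ f x = y := by
      intro y hy1 hy2
      have hy : y ∈ f '' Set.Icc a b := by
        rcases le_total (f a) (f b) with h | h
        · have hA' : A = f a := min_eq_left h
          have hB' : B = f b := max_eq_right h
          exact intermediate_value_Icc hab hcf ⟨le_of_lt (hA' ▸ hy1), le_of_lt (hB' ▸ hy2)⟩
        · have hA' : A = f b := min_eq_right h
          have hB' : B = f a := max_eq_left h
          exact intermediate_value_Icc' hab hcf ⟨le_of_lt (hA' ▸ hy1), le_of_lt (hB' ▸ hy2)⟩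
      obtain ⟨x, hx, hfx⟩ := hy
      have hxa : x ≠ a := by
        intro h
        rw [h] at hfx
        rcases le_total (f a) (f b) with h' | h'
        · have hA' : A = f a := min_eq_left h'
          rw [hA', hfx] at hy1
          exact lt_irrefl _ hy1
        · have hB' : B = f a := max_eq_left h'
          rw [hB', hfx] at hy2
          exact lt_irrefl _ hy2
      have hxb : x ≠ b := by
        intro h
        rw [h] at hfx
        rcases le_total (f a) (f b) with h' | h'
        · have hB' : B = f b := max_eq_right h'
          rw [hB', hfx] at hy2
          exact lt_irrefl _ hy2
        · have hA' : A = f b := min_eq_right h'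
          rw [hA', hfx] at hy1
          exact lt_irrefl _ hy1
      exact ⟨x, lt_of_le_of_ne hx.1 (Ne.symm hxa), lt_of_le_of_ne hx.2 hxb, hfx⟩
    have hfree' : ∀ y, A < y → y < B → ∀ i, i < j → f^[i] y ≠ c := by
      intro y hy1 hy2 i hi
      obtain ⟨x, hx1, hx2, rfl⟩ := hsurj y hy1 hy2
      rw [← Function.iterate_succ_apply]
      exact hfree x hx1 hx2 (i+1) (by omega)
    have ihAB := ih A B hA0 hAB hB1 hfree'
    rcases hm1 with m1 | a1 <;> rcases ihAB with m2 | a2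
    · left
      intro x hx y hy hxy
      rw [Function.iterate_succ_apply, Function.iterate_succ_apply]
      exact m2 (hmapsJ hx) (hmapsJ hy) (m1 hx hy hxy)
    · right
      intro x hx y hy hxy
      rw [Function.iterate_succ_apply, Function.iterate_succ_apply]
      exact a2 (hmapsJ hx) (hmapsJ hy) (m1 hx hy hxy)
    · right
      intro x hx y hy hxy
      rw [Function.iterate_succ_apply, Function.iterate_succ_apply]
      exact m2 (hmapsJ hy) (hmapsJ hx) (a1 hx hy hxy)
    · left
      intro x hx y hy hxy
      rw [Function.iterate_succ_apply, Function.iterate_succ_apply]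
      exact a2 (hmapsJ hy) (hmapsJ hx) (a1 hx hy hxy)

variable {f : ℝ → ℝ} {c : ℝ}

lemma ballMono (hf : IsFibonacciMap f c) (b j : ℕ) (hj : j ≤ fibS (b+1)) :
    MonoOrAnti f^[j] (Set.Icc c (c + D f c b)) := by
  apply mono_iter hf j c (c + D f c b) (le_of_lt (hc0 hf))
    (by linarith [D_pos hf b]) (by linarith [D_anti hf (Nat.zero_le b), (window hf).2])
  intro x hx1 hx2 i hi hfi
  rcases Nat.eq_zero_or_pos i with h0 | h1
  · rw [h0] at hfi
    simp at hfi
    linarith [hfi ▸ hx1]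
  · have hxm : x ∈ Pre f c i := by
      refine ⟨⟨by linarith [hc0 hf], by linarith [D_anti hf (Nat.zero_le b), (window hf).2]⟩, hfi⟩
    have := record hf h1 (by omega : i < fibS (b+1)) hxm
    rw [abs_of_pos (by linarith)] at this
    linarith

lemma zero_at (hf : IsFibonacciMap f c) (κ : ℕ) : f^[fibS κ] (c + D f c κ) = c := by
  obtain ⟨z, hzP, hzd⟩ := pre_attain hf (pre_cut_nonempty hf κ)
  have h1 : |z - c| ≤ D f c 0 := by
    rw [hzd]; exact D_anti hf (Nat.zero_le κ)
  have := sym_pre hf hzP.1 h1 (fibS_one_le κ)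
  rw [hzd] at this
  rw [show preimDist f c (fibS κ) = D f c κ from rfl] at this
  rw [this]
  exact hzP.2

section ZL
variable {g : ℝ → ℝ} {r e : ℝ}

lemma zl_le (hm : MonoOrAnti g (Set.Icc c (c+r))) (he : 0 < e) (her : e ≤ r)
    (hz : g (c+e) = c) {s t : ℝ} (hs : 0 ≤ s) (hst : s ≤ t) (hte : t ≤ e) :
    |g (c+t) - c| ≤ |g (c+s) - c| := by
  have mem : ∀ u : ℝ, 0 ≤ u → u ≤ r → c + u ∈ Set.Icc c (c+r) := by
    intro u h1 h2; exact ⟨by linarith, by linarith⟩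
  have ms := mem s hs (by linarith)
  have mt := mem t (by linarith) (by linarith)
  have me := mem e (by linarith) her
  rcases hm with m | a
  · have h1 : g (c+s) ≤ g (c+t) := m.monotoneOn ms mt (by linarith)
    have h2 : g (c+t) ≤ g (c+e) := m.monotoneOn mt me (by linarith)
    rw [hz] at h2
    rw [abs_of_nonpos (by linarith), abs_of_nonpos (by linarith)]
    linarith
  · have h1 : g (c+t) ≤ g (c+s) := a.antitoneOn ms mt (by linarith)
    have h2 : g (c+e) ≤ g (c+t) := a.antitoneOn mt me (by linarith)
    rw [hz] at h2
    rw [abs_of_nonneg (by linarith), abs_of_nonneg (by linarith)]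
    linarith

lemma zl_lt (hm : MonoOrAnti g (Set.Icc c (c+r))) (he : 0 < e) (her : e ≤ r)
    (hz : g (c+e) = c) {s t : ℝ} (hs : 0 ≤ s) (hst : s < t) (hte : t ≤ e) :
    |g (c+t) - c| < |g (c+s) - c| := by
  have mem : ∀ u : ℝ, 0 ≤ u → u ≤ r → c + u ∈ Set.Icc c (c+r) := by
    intro u h1 h2; exact ⟨by linarith, by linarith⟩
  have ms := mem s hs (by linarith)
  have mt := mem t (by linarith) (by linarith)
  have me := mem e (by linarith) her
  rcases hm with m | a
  · have h1 : g (c+s) < g (c+t) := m ms mt (by linarith)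
    have h2 : g (c+t) ≤ g (c+e) := m.monotoneOn mt me (by linarith)
    rw [hz] at h2
    rw [abs_of_nonpos (by linarith), abs_of_nonpos (by linarith)]
    linarith
  · have h1 : g (c+t) < g (c+s) := a ms mt (by linarith)
    have h2 : g (c+e) ≤ g (c+t) := a.antitoneOn mt me (by linarith)
    rw [hz] at h2
    rw [abs_of_nonneg (by linarith), abs_of_nonneg (by linarith)]
    linarith

lemma zl_side (hm : MonoOrAnti g (Set.Icc c (c+r))) (he : 0 < e) (her : e ≤ r)
    (hz : g (c+e) = c) {s : ℝ} (hs : 0 ≤ s) (hse : s < e) :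
    (g (c+s) < c ∧ g c < c) ∨ (c < g (c+s) ∧ c < g c) := by
  have mem : ∀ u : ℝ, 0 ≤ u → u ≤ r → c + u ∈ Set.Icc c (c+r) := by
    intro u h1 h2; exact ⟨by linarith, by linarith⟩
  have mc : c ∈ Set.Icc c (c+r) := ⟨le_refl _, by linarith⟩
  have ms := mem s hs (by linarith)
  have me := mem e (by linarith) her
  rcases hm with m | a
  · left
    have h1 : g (c+s) < g (c+e) := m ms me (by linarith)
    have h2 : g c ≤ g (c+s) := m.monotoneOn mc ms (by linarith)
    rw [hz] at h1
    exact ⟨h1, by linarith⟩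
  · right
    have h1 : g (c+e) < g (c+s) := a ms me (by linarith)
    have h2 : g (c+s) ≤ g c := a.antitoneOn mc ms (by linarith)
    rw [hz] at h1
    exact ⟨h1, by linarith⟩

lemma zl_flip (hm : MonoOrAnti g (Set.Icc c (c+r))) (he : 0 < e) (her : e ≤ r)
    (hz : g (c+e) = c) {t : ℝ} (het : e < t) (htr : t ≤ r) :
    (g c < c → c < g (c+t)) ∧ (c < g c → g (c+t) < c) := by
  have mem : ∀ u : ℝ, 0 ≤ u → u ≤ r → c + u ∈ Set.Icc c (c+r) := by
    intro u h1 h2; exact ⟨by linarith, by linarith⟩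
  have mc : c ∈ Set.Icc c (c+r) := ⟨le_refl _, by linarith⟩
  have mt := mem t (by linarith) htr
  have me := mem e (by linarith) her
  rcases hm with m | a
  · have h1 : g c < g (c+e) := m mc me (by linarith)
    have h2 : g (c+e) < g (c+t) := m me mt (by linarith)
    rw [hz] at h1 h2
    exact ⟨fun _ => h2, fun hcc => absurd hcc (not_lt.mpr h1.le)⟩
  · have h1 : g (c+e) < g c := a mc me (by linarith)
    have h2 : g (c+t) < g (c+e) := a me mt (by linarith)
    rw [hz] at h1 h2
    exact ⟨fun hcc => absurd hcc (not_lt.mpr h1.le), fun _ => h2⟩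

lemma zl_reach (hg : ContinuousOn g (Set.Icc c (c+e))) (he : 0 < e)
    (hz : g (c+e) = c) {y : ℝ} (h1 : min (g c) c ≤ y) (h2 : y ≤ max (g c) c) :
    ∃ x, c ≤ x ∧ x ≤ c + e ∧ g x = y := by
  have hce : c ≤ c + e := by linarith
  rcases le_total (g c) c with h | h
  · have : y ∈ Set.Icc (g c) (g (c+e)) := by
      rw [hz]
      exact ⟨by rw [min_eq_left h] at h1; exact h1,
        by rw [max_eq_right h] at h2; exact h2⟩
    obtain ⟨x, hx, hgx⟩ := intermediate_value_Icc hce hg this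
    exact ⟨x, hx.1, hx.2, hgx⟩
  · have : y ∈ Set.Icc (g (c+e)) (g c) := by
      rw [hz]
      exact ⟨by rw [min_eq_right h] at h1; exact h1, by rw [max_eq_left h] at h2; exact h2⟩
    obtain ⟨x, hx, hgx⟩ := intermediate_value_Icc' hce hg this
    exact ⟨x, hx.1, hx.2, hgx⟩

end ZL

variable {f : ℝ → ℝ} {c : ℝ}

def gam (f : ℝ → ℝ) (c : ℝ) (k : ℕ) : ℝ := f^[fibS k] c

lemma fib_split (k : ℕ) (x : ℝ) :
    f^[fibS (k+2)] x = f^[fibS k] (f^[fibS (k+1)] x) := by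
  rw [fibS_add_two, Nat.add_comm, Function.iterate_add_apply]

lemma fib_split' (k : ℕ) (x : ℝ) :
    f^[fibS (k+2)] x = f^[fibS (k+1)] (f^[fibS k] x) := by
  rw [fibS_add_two, Function.iterate_add_apply]

/-- the marker point y_k = f^[S_{k+1}](c + D_{k+2}) is an S_k-preimage -/
lemma marker_pre (hf : IsFibonacciMap f c) (k : ℕ) :
    f^[fibS k] (f^[fibS (k+1)] (c + D f c (k+2))) = c := by
  rw [← fib_split]
  exact zero_at hf (k+2)

lemma marker_mem (hf : IsFibonacciMap f c) (k : ℕ) :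
    f^[fibS (k+1)] (c + D f c (k+2)) ∈ Set.Icc (0:ℝ) 1 := by
  apply iter_maps hf
  exact (mirror_mem hf (le_of_lt (D_pos hf (k+2))) (D_anti hf (Nat.zero_le _))).1

lemma gam_low (hf : IsFibonacciMap f c) (k : ℕ) : D f c k < |gam f c (k+1) - c| := by
  have hm := ballMono hf (k+1) (fibS (k+1)) (le_of_lt (fibS_strictMono (by omega)))
  have hz := zero_at hf (k+1)
  have hlt := zl_lt hm (D_pos hf (k+1)) (le_refl _) hz (le_refl (0:ℝ))
    (D_pos hf (k+2)) (le_of_lt (D_succ_lt hf (k+1)))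
  rw [add_zero] at hlt
  have hy : D f c k ≤ |f^[fibS (k+1)] (c + D f c (k+2)) - c| := by
    apply record hf (fibS_one_le k) (fibS_lt_succ k) ⟨marker_mem hf k, marker_pre hf k⟩
  calc D f c k ≤ |f^[fibS (k+1)] (c + D f c (k+2)) - c| := hy
    _ < |f^[fibS (k+1)] c - c| := hlt
    _ = |gam f c (k+1) - c| := rfl

/-- the point at distance D k on either side is an S_k-preimage -/
lemma dist_pre (hf : IsFibonacciMap f c) (k : ℕ) {p : ℝ} (hp : |p - c| = D f c k) :
    f^[fibS k] p = c := by
  have hpm : p ∈ Set.Icc (0:ℝ) 1 := by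
    have := mirror_mem hf (le_of_lt (D_pos hf k)) (D_anti hf (Nat.zero_le k))
    rcases abs_cases (p - c) with ⟨h1, _⟩ | ⟨h1, _⟩
    · have : p = c + D f c k := by rw [← hp, h1]; ring
      rw [this]
      exact (mirror_mem hf (le_of_lt (D_pos hf k)) (D_anti hf (Nat.zero_le k))).1
    · have : p = c - D f c k := by rw [← hp, h1]; ring
      rw [this]
      exact (mirror_mem hf (le_of_lt (D_pos hf k)) (D_anti hf (Nat.zero_le k))).2
  have := sym_pre hf hpm (by rw [hp]; exact D_anti hf (Nat.zero_le k)) (fibS_one_le k)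
  rw [hp] at this
  rw [← this]
  exact zero_at hf k

/-- exact identity: |f^[S_{k+1}](c + D_{k+2}) - c| = D k -/
lemma identityD (hf : IsFibonacciMap f c) (k : ℕ) :
    |f^[fibS (k+1)] (c + D f c (k+2)) - c| = D f c k := by
  have hge : D f c k ≤ |f^[fibS (k+1)] (c + D f c (k+2)) - c| :=
    record hf (fibS_one_le k) (fibS_lt_succ k) ⟨marker_mem hf k, marker_pre hf k⟩
  by_contra hne
  have hgt : D f c k < |f^[fibS (k+1)] (c + D f c (k+2)) - c| :=
    lt_of_le_of_ne hge (Ne.symm hne)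
  have hm := ballMono hf (k+1) (fibS (k+1)) (le_of_lt (fibS_strictMono (by omega)))
  have hz := zero_at hf (k+1)
  have hside := zl_side hm (D_pos hf (k+1)) (le_refl _) hz
    (le_of_lt (D_pos hf (k+2))) (D_succ_lt hf (k+1))
  have hlt := zl_lt hm (D_pos hf (k+1)) (le_refl _) hz (le_refl (0:ℝ))
    (D_pos hf (k+2)) (le_of_lt (D_succ_lt hf (k+1)))
  rw [add_zero] at hlt
  have hcontg : ContinuousOn f^[fibS (k+1)] (Set.Icc c (c + D f c (k+1))) := by
    apply (iter_cont hf (fibS (k+1))).mono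
    intro u hu
    exact ⟨by linarith [hu.1, hc0 hf],
      by linarith [hu.2, D_anti hf (Nat.zero_le (k+1)), (window hf).2]⟩
  have hfinish : ∀ p : ℝ, |p - c| = D f c k →
      (∃ x, c ≤ x ∧ x ≤ c + D f c (k+1) ∧ f^[fibS (k+1)] x = p) → False := by
    intro p hp ⟨x, hx1, hx2, hgx⟩
    have hxpre : f^[fibS (k+2)] x = c := by
      rw [fib_split, hgx]
      exact dist_pre hf k hp
    have hminj : Set.InjOn f^[fibS (k+2)] (Set.Icc c (c + D f c (k+1))) := by
      rcases ballMono hf (k+1) (fibS (k+2)) (le_refl _) with m | a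
      · exact m.injOn
      · exact a.injOn
    have hxd : x = c + D f c (k+2) := by
      apply hminj ⟨hx1, hx2⟩
        ⟨by linarith [D_pos hf (k+2)], by linarith [D_succ_lt hf (k+1)]⟩
      rw [hxpre]
      exact (zero_at hf (k+2)).symm
    rw [hxd] at hgx
    rw [hgx, hp] at hgt
    exact lt_irrefl _ hgt
  obtain ⟨hy1, hy2⟩ | ⟨hy1, hy2⟩ := hside
  · -- left side : p = c - D k
    have hyabs : |f^[fibS (k+1)] (c + D f c (k+2)) - c|
        = c - f^[fibS (k+1)] (c + D f c (k+2)) := by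
      rw [abs_of_neg (by linarith)]; ring
    have hgabs : |f^[fibS (k+1)] c - c| = c - f^[fibS (k+1)] c := by
      rw [abs_of_neg (by linarith)]; ring
    apply hfinish (c - D f c k)
      (by rw [show (c - D f c k) - c = -(D f c k) by ring, abs_neg,
        abs_of_pos (D_pos hf k)])
    apply zl_reach hcontg (D_pos hf (k+1)) hz
    · rw [min_eq_left (by linarith : f^[fibS (k+1)] c ≤ c)]
      rw [hyabs] at hgt; rw [hyabs, hgabs] at hlt
      linarith
    · rw [max_eq_right (by linarith : f^[fibS (k+1)] c ≤ c)]
      linarith [D_pos hf k]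
  · -- right side : p = c + D k
    have hyabs : |f^[fibS (k+1)] (c + D f c (k+2)) - c|
        = f^[fibS (k+1)] (c + D f c (k+2)) - c := abs_of_pos (by linarith)
    have hgabs : |f^[fibS (k+1)] c - c| = f^[fibS (k+1)] c - c :=
      abs_of_pos (by linarith)
    apply hfinish (c + D f c k)
      (by rw [show (c + D f c k) - c = D f c k by ring, abs_of_pos (D_pos hf k)])
    apply zl_reach hcontg (D_pos hf (k+1)) hz
    · rw [min_eq_right (by linarith : c ≤ f^[fibS (k+1)] c)]
      linarith [D_pos hf k]
    · rw [max_eq_left (by linarith : c ≤ f^[fibS (k+1)] c)]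
      rw [hyabs] at hgt; rw [hyabs, hgabs] at hlt
      linarith

variable {f : ℝ → ℝ} {c : ℝ}

lemma gam_up (hf : IsFibonacciMap f c) (k : ℕ) : |gam f c (k+2) - c| < D f c k := by
  by_contra hne
  push_neg at hne
  have hgamne : gam f c (k+2) ≠ c := by
    intro h
    rw [h, sub_self, abs_zero] at hne
    exact absurd (lt_of_lt_of_le (D_pos hf k) hne) (lt_irrefl _)
  have hcontg : ContinuousOn f^[fibS (k+2)] (Set.Icc c (c + D f c (k+2))) := by
    apply (iter_cont hf (fibS (k+2))).mono
    intro u hu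
    exact ⟨by linarith [hu.1, hc0 hf],
      by linarith [hu.2, D_anti hf (Nat.zero_le (k+2)), (window hf).2]⟩
  have hz := zero_at hf (k+2)
  have hfinish : ∀ p : ℝ, |p - c| = D f c k →
      (∃ x, c ≤ x ∧ x ≤ c + D f c (k+2) ∧ f^[fibS (k+2)] x = p) → False := by
    intro p hp ⟨x, hx1, hx2, hgx⟩
    have hxpre : f^[fibS k + fibS (k+2)] x = c := by
      rw [Function.iterate_add_apply, hgx]
      exact dist_pre hf k hp
    have hxmem : x ∈ Set.Icc (0:ℝ) 1 := by
      constructor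
      · linarith [hc0 hf]
      · linarith [D_anti hf (Nat.zero_le (k+2)), (window hf).2]
    have hrec := record (k := k+2) hf (by have := fibS_one_le k; omega) (by
      have h3 : fibS ((k+2)+1) = fibS (k+2) + fibS (k+1) := fibS_add_two (k+1)
      have h4 := fibS_lt_succ k
      omega) ⟨hxmem, hxpre⟩
    rw [abs_of_nonneg (by linarith)] at hrec
    have hxd : x = c + D f c (k+2) := by linarith
    rw [hxd, hz] at hgx
    rw [← hgx] at hp
    rw [sub_self, abs_zero] at hp
    exact absurd (hp ▸ D_pos hf k) (lt_irrefl _)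
  rcases lt_or_gt_of_ne hgamne with h | h
  · -- gam (k+2) < c : p = c - D k between gam (k+2) and c
    apply hfinish (c - D f c k)
      (by rw [show (c - D f c k) - c = -(D f c k) by ring, abs_neg,
        abs_of_pos (D_pos hf k)])
    apply zl_reach hcontg (D_pos hf (k+2)) hz
    · show gam f c (k+2) ⊓ c ≤ c - D f c k
      rw [min_eq_left (le_of_lt h)]
      rw [abs_of_neg (by linarith)] at hne
      linarith
    · show c - D f c k ≤ gam f c (k+2) ⊔ c
      rw [max_eq_right (le_of_lt h)]
      linarith [D_pos hf k]
  · apply hfinish (c + D f c k)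
      (by rw [show (c + D f c k) - c = D f c k by ring, abs_of_pos (D_pos hf k)])
    apply zl_reach hcontg (D_pos hf (k+2)) hz
    · show gam f c (k+2) ⊓ c ≤ c + D f c k
      rw [min_eq_right (le_of_lt h)]
      linarith [D_pos hf k]
    · show c + D f c k ≤ gam f c (k+2) ⊔ c
      rw [max_eq_left (le_of_lt h)]
      rw [abs_of_pos (by linarith)] at hne
      linarith

def Pos (n : ℕ) : Prop := n % 4 = 0 ∨ n % 4 = 3

lemma pos_flip (n : ℕ) : Pos (n+2) ↔ ¬ Pos n := by
  unfold Pos; omega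

/-- the sign pattern of the closest returns -/
lemma sign_gam (hf : IsFibonacciMap f c) : ∀ k, (Pos k → c < gam f c k) ∧
    (¬ Pos k → gam f c k < c) := by
  have base0 : c < gam f c 0 := by
    have : gam f c 0 = f c := by
      show f^[fibS 0] c = f c
      rw [show fibS 0 = 1 from rfl, Function.iterate_one]
    rw [this]; exact fc_gt hf
  have base1 : gam f c 1 < c := by
    show f^[fibS 1] c < c
    exact (gamma1_lt hf).1
  have base2 : gam f c 2 < c := by
    -- gam 1 < xL and gam 2 = f (gam 1) < f xL = c
    obtain ⟨xL, hl1, hl2, hl3, hl4⟩ := exists_xL hf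
    have hyid := identityD hf 0
    have hm := ballMono hf 1 (fibS 1) (le_of_lt (fibS_strictMono (by omega)))
    have hz := zero_at hf 1
    have hside := zl_side hm (D_pos hf 1) (le_refl _) hz
      (le_of_lt (D_pos hf 2)) (D_succ_lt hf 1)
    have hlt := zl_lt hm (D_pos hf 1) (le_refl _) hz (le_refl (0:ℝ))
      (D_pos hf 2) (le_of_lt (D_succ_lt hf 1))
    rw [add_zero] at hlt
    have hgc : f^[fibS 1] c < c := (gamma1_lt hf).1
    have hy1 : f^[fibS 1] (c + D f c 2) < c := by
      rcases hside with ⟨h1, _⟩ | ⟨_, h2⟩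
      · exact h1
      · linarith
    -- y := f^[2](c + D 2) is a 1-preimage on the left, so y = xL
    have hypre : f (f^[fibS 1] (c + D f c 2)) = c := by
      have := marker_pre hf 0
      rw [show fibS 0 = 1 from rfl, Function.iterate_one] at this
      exact this
    have hymem := marker_mem hf 0
    have hyeq : f^[fibS 1] (c + D f c 2) = xL :=
      hl4 _ hymem.1 (le_of_lt hy1) hypre
    -- gam 1 < y = xL
    have habs1 : |f^[fibS 1] (c + D f c 2) - c| = c - f^[fibS 1] (c + D f c 2) := by
      rw [abs_of_neg (by linarith)]; ring
    have habs2 : |f^[fibS 1] c - c| = c - f^[fibS 1] c := by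
      rw [abs_of_neg (by linarith)]; ring
    rw [habs1, habs2] at hlt
    have hgam1lt : f^[fibS 1] c < xL := by rw [← hyeq]; linarith
    have hgam1mem : f^[fibS 1] c ∈ Set.Icc (0:ℝ) 1 := orbit_mem hf (fibS 1)
    have : f (f^[fibS 1] c) < f xL :=
      hmono hf ⟨hgam1mem.1, by linarith⟩ ⟨le_of_lt hl1, le_of_lt hl2⟩ hgam1lt
    rw [hl3] at this
    show f^[fibS 2] c < c
    rw [fib_split' 0 c, show fibS 0 = 1 from rfl, Function.iterate_one]
    exact this
  -- inductive flip for k ≥ 1 : sign (k+3) = - sign (k+1)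
  have flip : ∀ i : ℕ, (gam f c (i+1) < c → c < gam f c (i+3)) ∧
      (c < gam f c (i+1) → gam f c (i+3) < c) := by
    intro i
    have hm := ballMono hf i (fibS (i+1)) (by rfl)
    have hz := zero_at hf (i+1)
    have ht1 : D f c (i+1) < |gam f c (i+2) - c| := gam_low hf (i+1)
    have ht2 : |gam f c (i+2) - c| < D f c i := gam_up hf i
    have hflip := zl_flip hm (D_pos hf (i+1)) (le_of_lt (D_succ_lt hf i)) hz
      ht1 (le_of_lt ht2)
    have ht2' : |f^[fibS (i+2)] c - c| < D f c i := ht2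
    have he1 : f^[fibS (i+1)] (c + |gam f c (i+2) - c|) = gam f c (i+3) := by
      have hs := sym_pre hf (orbit_mem hf (fibS (i+2)))
        (by linarith [D_anti hf (Nat.zero_le i)]) (fibS_one_le (i+1))
      show f^[fibS (i+1)] (c + |f^[fibS (i+2)] c - c|) = f^[fibS (i+3)] c
      rw [hs]
      rw [← fib_split]
    rw [he1] at hflip
    exact hflip
  intro k
  induction k using Nat.strong_induction_on with
  | _ k ih =>
    match k with
    | 0 => exact ⟨fun _ => base0, fun h => absurd (Or.inl rfl) h⟩
    | 1 => exact ⟨fun h => by exfalso; unfold Pos at h; omega, fun _ => base1⟩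
    | 2 => exact ⟨fun h => by exfalso; unfold Pos at h; omega, fun _ => base2⟩
    | (i+3) =>
      have hih := ih (i+1) (by omega)
      have hflip := flip i
      constructor
      · intro hp
        have hnp : ¬ Pos (i+1) := by
          rw [show i+3 = (i+1)+2 from rfl, pos_flip] at hp
          exact hp
        exact hflip.1 (hih.2 hnp)
      · intro hp
        have hnp : Pos (i+1) := by
          rw [show i+3 = (i+1)+2 from rfl, pos_flip] at hp
          exact not_not.mp hp
        exact hflip.2 (hih.1 hnp)

variable {f : ℝ → ℝ} {c : ℝ}

/-- the two-term orbit point X n = c_{S_n + S_{n+2}} -/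
def X (f : ℝ → ℝ) (c : ℝ) (n : ℕ) : ℝ := f^[fibS n + fibS (n+2)] c

lemma two_term_eq (hf : IsFibonacciMap f c) (κ : ℕ) :
    f^[fibS κ] (c + |gam f c (κ+2) - c|) = X f c κ := by
  have hb : |gam f c (κ+2) - c| ≤ D f c 0 :=
    le_trans (le_of_lt (gam_up hf κ)) (D_anti hf (Nat.zero_le κ))
  have hs := sym_pre hf (orbit_mem hf (fibS (κ+2))) (x := f^[fibS (κ+2)] c)
    hb (fibS_one_le κ)
  show f^[fibS κ] (c + |f^[fibS (κ+2)] c - c|) = f^[fibS κ + fibS (κ+2)] c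
  rw [hs, ← Function.iterate_add_apply]

lemma gam0_far (hf : IsFibonacciMap f c) : D f c 0 < |gam f c 0 - c| := by
  have h1 := (window hf).1
  have h2 := fc_gt hf
  have : gam f c 0 = f c := by
    show f^[fibS 0] c = f c
    rw [show fibS 0 = 1 from rfl, Function.iterate_one]
  rw [this, abs_of_pos (by linarith)]
  linarith

/-- base case: X 0 = c_4 is beyond c + D 1 -/
lemma X0_gt (hf : IsFibonacciMap f c) : D f c 1 < |X f c 0 - c| ∧ c < X f c 0 := by
  obtain ⟨z', hz1, hz2, hz3, hz4⟩ := exists_zR hf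
  have hd0z : c + D f c 0 ≤ z' := by
    have := D0_le_pre1 hf ⟨le_trans (le_of_lt (hc0 hf)) (le_of_lt hz1), hz2⟩ hz3
    rw [abs_of_pos (by linarith)] at this; linarith
  have hwin := (window hf).2
  have hd10 := D_succ_lt hf 0
  have hd21 := D_succ_lt hf 1
  have hd1pos := D_pos hf 1
  have hd2pos := D_pos hf 2
  -- (a) f (c + D 1) = z'
  have hz1pre : f (f (c + D f c 1)) = c := by
    have := zero_at hf 1
    rw [show fibS 1 = 2 from rfl] at this
    rw [← iter_two f (c + D f c 1)]
    exact this
  have hcd1mem : c + D f c 1 ∈ Set.Icc (0:ℝ) 1 := by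
    constructor <;> [linarith [hc0 hf]; linarith]
  have hfd1_gt : c < f (c + D f c 1) := by
    have := hanti hf ⟨by linarith, hcd1mem.2⟩ ⟨hz1.le, hz2⟩ (by linarith)
    rw [hz3] at this; exact this
  have hfd1mem : f (c + D f c 1) ∈ Set.Icc (0:ℝ) 1 := hmaps hf hcd1mem
  have hweq : f (c + D f c 1) = z' := hz4 _ hfd1_gt.le hfd1mem.2 hz1pre
  -- (b) c_6 = f (gam 3) > z'
  have hg3pos : c < gam f c 3 := (sign_gam hf 3).1 (Or.inr rfl)
  have hg3up : |gam f c 3 - c| < D f c 1 := gam_up hf 1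
  have hg3lt : gam f c 3 < c + D f c 1 := by
    rw [abs_of_pos (by linarith)] at hg3up; linarith
  have hg3mem : gam f c 3 ∈ Set.Icc (0:ℝ) 1 := orbit_mem hf (fibS 3)
  have hc6 : z' < f (gam f c 3) := by
    have := hanti hf ⟨hg3pos.le, hg3mem.2⟩ ⟨by linarith, hcd1mem.2⟩ hg3lt
    rw [hweq] at this; exact this
  -- (c) X 0 = f u with u = c + |gam 2 - c| ∈ (c + D 1, c + D 0)
  have hg2low : D f c 1 < |gam f c 2 - c| := gam_low hf 1
  have hg2up : |gam f c 2 - c| < D f c 0 := gam_up hf 0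
  have hX0 : f (c + |gam f c 2 - c|) = X f c 0 := by
    have := two_term_eq hf 0
    rw [show fibS 0 = 1 from rfl, Function.iterate_one] at this
    exact this
  have humem : c + |gam f c 2 - c| ∈ Set.Icc (0:ℝ) 1 := by
    constructor <;> [linarith [hc0 hf, abs_nonneg (gam f c 2 - c)]; linarith]
  have hX0z : X f c 0 < z' := by
    rw [← hX0, ← hweq]
    exact hanti hf ⟨by linarith, hcd1mem.2⟩ ⟨by linarith [abs_nonneg (gam f c 2 - c)], humem.2⟩
      (by linarith)
  have hX0c : c < X f c 0 := by
    rw [← hX0]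
    have := hanti hf ⟨by linarith [abs_nonneg (gam f c 2 - c)], humem.2⟩ ⟨by linarith, hz2⟩
      (by linarith)
    rw [hz3] at this; exact this
  -- (d) MonoOrAnti f^[2] on [c, z']
  have hmono2 : MonoOrAnti f^[2] (Set.Icc c z') := by
    apply mono_iter hf 2 c z' (le_of_lt (hc0 hf)) (by linarith) hz2
    intro x hx1 hx2 i hi hfi
    interval_cases i
    · simp at hfi; linarith [hfi ▸ hx1]
    · rw [Function.iterate_one] at hfi
      have := hz4 x (by linarith) (by linarith) hfi
      linarith [this ▸ hx2]
  -- f^[2] values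
  have h2c : f^[2] c < c := (gamma1_lt hf).1
  have h2d1 : f^[2] (c + D f c 1) = c := by
    have := zero_at hf 1
    rw [show fibS 1 = 2 from rfl] at this
    exact this
  have h2X0 : z' < f^[2] (X f c 0) := by
    have e6 : f^[2] (X f c 0) = f (gam f c 3) := by
      show f^[2] (f^[fibS 0 + fibS 2] c) = f (f^[fibS 3] c)
      rw [show fibS 0 + fibS 2 = 4 from rfl, show fibS 3 = 5 from rfl]
      show f^[2] (f^[4] c) = f^[1] (f^[5] c)
      rw [← Function.iterate_add_apply, ← Function.iterate_add_apply]
    rw [e6]; exact hc6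
  -- rule out Anti; then monotone comparison gives c + D 1 < X 0
  have hX0mem : X f c 0 ∈ Set.Icc c z' := ⟨hX0c.le, hX0z.le⟩
  have hd1mem : c + D f c 1 ∈ Set.Icc c z' := ⟨by linarith, by linarith⟩
  have hcmem : c ∈ Set.Icc c z' := ⟨le_refl _, by linarith⟩
  have hkey : c + D f c 1 < X f c 0 := by
    rcases hmono2 with m | a
    · by_contra hle
      push_neg at hle
      have := m.monotoneOn hX0mem hd1mem hle
      rw [h2d1] at this
      linarith
    · exfalso
      have := a hcmem hX0mem hX0c
      linarith
  exact ⟨by rw [abs_of_pos (by linarith)]; linarith, hX0c⟩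

/-- step A : T'(n+1) from V n -/
lemma stepA (hf : IsFibonacciMap f c) (n : ℕ)
    (hV : |gam f c (n+4) - c| < |X f c n - c|) :
    |gam f c (n+2) - c| < |X f c (n+1) - c| := by
  set t2 := |gam f c (n+3) - c| with ht2def
  have ht2low : D f c (n+2) < t2 := gam_low hf (n+2)
  have ht2up : t2 < D f c (n+1) := gam_up hf (n+1)
  -- σX := |X (n+1) - c| < D n
  have hm1 := ballMono hf (n+1) (fibS (n+1)) (le_of_lt (fibS_lt_succ (n+1)))
  have hz1 := zero_at hf (n+1)
  have hXeq : f^[fibS (n+1)] (c + t2) = X f c (n+1) := two_term_eq hf (n+1)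
  have hXlt : |X f c (n+1) - c| < D f c n := by
    have := zl_lt hm1 (D_pos hf (n+1)) (le_refl _) hz1
      (le_of_lt (D_pos hf (n+2))) ht2low (le_of_lt ht2up) |>.trans_le
      (le_of_eq (identityD hf n))
    rw [hXeq] at this
    exact this
  -- G step on ball n
  have hm0 := ballMono hf n (fibS n) (le_of_lt (fibS_lt_succ n))
  have hz0 := zero_at hf n
  have hGX : f^[fibS n] (c + |X f c (n+1) - c|) = gam f c (n+4) := by
    have hb : |X f c (n+1) - c| ≤ D f c 0 :=
      le_trans hXlt.le (D_anti hf (Nat.zero_le n))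
    have hXorb : X f c (n+1) ∈ Set.Icc (0:ℝ) 1 := orbit_mem hf _
    have hs := sym_pre hf hXorb hb (fibS_one_le n)
    rw [hs]
    show f^[fibS n] (f^[fibS (n+1) + fibS (n+3)] c) = f^[fibS (n+4)] c
    rw [← Function.iterate_add_apply]
    congr 1
    have e1 : fibS (n+2) = fibS (n+1) + fibS n := fibS_add_two n
    have e2 : fibS (n+3) = fibS (n+2) + fibS (n+1) := fibS_add_two (n+1)
    have e3 : fibS (n+4) = fibS (n+3) + fibS (n+2) := fibS_add_two (n+2)
    omega
  have hGt2' : f^[fibS n] (c + |gam f c (n+2) - c|) = X f c n := two_term_eq hf n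
  -- contrapositive via zl_le
  by_contra hle
  push_neg at hle
  have hcmp := zl_le hm0 (D_pos hf n) (le_refl _) hz0
    (abs_nonneg _) hle (le_of_lt (gam_up hf n))
  rw [hGX, hGt2'] at hcmp
  linarith

/-- the V chain : |X n - c| > |gam (n+4) - c| for all n -/
lemma Vchain (hf : IsFibonacciMap f c) : ∀ n, |gam f c (n+4) - c| < |X f c n - c| := by
  intro n
  induction n with
  | zero =>
    have h1 := (X0_gt hf).1
    have h2 : |gam f c 4 - c| < D f c 2 := gam_up hf 2
    have h3 := D_succ_lt hf 1
    linarith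
  | succ i ih =>
    have hT := stepA hf i ih
    have h1 : |gam f c (i+5) - c| < D f c (i+3) := gam_up hf (i+3)
    have h2 : D f c (i+1) < |gam f c (i+2) - c| := gam_low hf (i+1)
    have h3 : D f c (i+3) ≤ D f c (i+1) := D_anti hf (by omega)
    calc |gam f c (i+1+4) - c| < D f c (i+3) := h1
      _ ≤ D f c (i+1) := h3
      _ < |gam f c (i+2) - c| := h2
      _ < |X f c (i+1) - c| := hT

lemma Tprime (hf : IsFibonacciMap f c) (n : ℕ) :
    |gam f c (n+2) - c| < |X f c (n+1) - c| := stepA hf n (Vchain hf n)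

variable {f : ℝ → ℝ} {c : ℝ}

/-- monotone decrease of |gam k - c| for k ≥ 1 -/
lemma gam_abs_succ_lt (hf : IsFibonacciMap f c) (j : ℕ) :
    |gam f c (j+2) - c| < |gam f c (j+1) - c| :=
  lt_trans (gam_up hf j) (gam_low hf j)

lemma gam_abs_anti (hf : IsFibonacciMap f c) {a b : ℕ} (ha : 1 ≤ a) (hab : a ≤ b) :
    |gam f c b - c| ≤ |gam f c a - c| := by
  induction b with
  | zero => omega
  | succ i ih =>
    rcases Nat.eq_or_lt_of_le hab with h | h
    · rw [h]
    · have h2 : a ≤ i := by omega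
      refine le_trans ?_ (ih h2)
      obtain ⟨i', rfl⟩ : ∃ i', i = i' + 1 := ⟨i - 1, by omega⟩
      exact le_of_lt (gam_abs_succ_lt hf i')

def Inv (f : ℝ → ℝ) (c : ℝ) (m n : ℕ) : Prop :=
  ((Pos n → c < f^[m] c) ∧ (¬ Pos n → f^[m] c < c)) ∧
  |f^[m] c - c| ≤ |gam f c n - c| ∧
  (n = 0 → |gam f c 3 - c| < |f^[m] c - c|) ∧
  (1 ≤ n → |gam f c (n+1) - c| < |f^[m] c - c|)

lemma inv_pure (hf : IsFibonacciMap f c) (n : ℕ) : Inv f c (fibS n) n := by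
  refine ⟨⟨fun h => (sign_gam hf n).1 h, fun h => (sign_gam hf n).2 h⟩, le_refl _, ?_, ?_⟩
  · rintro rfl
    have h1 : |gam f c 3 - c| < D f c 1 := gam_up hf 1
    have h2 := D_succ_lt hf 0
    have h3 := gam0_far hf
    show |gam f c 3 - c| < |gam f c 0 - c|
    linarith
  · intro hn
    obtain ⟨i, rfl⟩ : ∃ i, n = i + 1 := ⟨n - 1, by omega⟩
    exact gam_abs_succ_lt hf i

lemma inv_step (hf : IsFibonacciMap f c) {m₂ n n₂ : ℕ} (hgap : n + 2 ≤ n₂)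
    (hI : Inv f c m₂ n₂) : Inv f c (fibS n + m₂) n := by
  obtain ⟨⟨hsgn1, hsgn2⟩, hup, hlow0, hlow1⟩ := hI
  set s := |f^[m₂] c - c| with hsdef
  have hn2pos : 1 ≤ n₂ := by omega
  have hspos : 0 < s := lt_of_le_of_lt (abs_nonneg _) (hlow1 hn2pos)
  have hsle : s ≤ |gam f c (n+2) - c| :=
    le_trans hup (gam_abs_anti hf (by omega) hgap)
  have ht2up : |gam f c (n+2) - c| < D f c n := gam_up hf n
  have hslt : s < D f c n := lt_of_le_of_lt hsle ht2up
  have hm := ballMono hf n (fibS n) (le_of_lt (fibS_lt_succ n))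
  have hz := zero_at hf n
  have hceq : f^[fibS n + m₂] c = f^[fibS n] (c + s) := by
    rw [Function.iterate_add_apply]
    have hs := sym_pre hf (orbit_mem hf m₂)
      (le_trans hslt.le (D_anti hf (Nat.zero_le n))) (fibS_one_le n)
    rw [hs]
  have hside := zl_side hm (D_pos hf n) (le_refl _) hz (abs_nonneg _) hslt
  have hupper := zl_lt hm (D_pos hf n) (le_refl _) hz (le_refl (0:ℝ)) hspos hslt.le
  rw [add_zero] at hupper
  have hlower := zl_le hm (D_pos hf n) (le_refl _) hz (abs_nonneg _) hsle ht2up.le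
  rw [two_term_eq hf n] at hlower
  refine ⟨⟨?_, ?_⟩, ?_, ?_, ?_⟩
  · intro hp
    have hgc : c < gam f c n := (sign_gam hf n).1 hp
    rw [hceq]
    rcases hside with ⟨_, h2⟩ | ⟨h1, _⟩
    · exfalso; exact absurd hgc (not_lt.mpr h2.le)
    · exact h1
  · intro hp
    have hgc : gam f c n < c := (sign_gam hf n).2 hp
    rw [hceq]
    rcases hside with ⟨h1, _⟩ | ⟨_, h2⟩
    · exact h1
    · exfalso; exact absurd hgc (not_lt.mpr h2.le)
  · rw [hceq]; exact hupper.le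
  · rintro rfl
    have h1 : D f c 1 < |X f c 0 - c| := (X0_gt hf).1
    have h2 : |gam f c 3 - c| < D f c 1 := gam_up hf 1
    rw [hceq]
    linarith
  · intro hn
    obtain ⟨i, rfl⟩ : ∃ i, n = i + 1 := ⟨n - 1, by omega⟩
    have hT := Tprime hf i
    rw [hceq]
    linarith

lemma inv_main (hf : IsFibonacciMap f c) :
    ∀ (l : List ℕ) (n m : ℕ), l.head? = some n → l.Chain' (fun a b => a + 2 ≤ b) →
    (l.map fibS).sum = m → Inv f c m n := by
  intro l
  induction l with
  | nil => intro n m h; simp at h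
  | cons a t ih =>
    intro n m hh hch hsum
    have hna : n = a := by simpa using hh.symm
    subst hna
    cases t with
    | nil =>
      simp at hsum
      rw [← hsum]
      exact inv_pure hf n
    | cons b t' =>
      rw [List.Chain', List.isChain_cons_cons] at hch
      have hI := ih b (((b :: t').map fibS).sum) rfl hch.2 rfl
      have : m = fibS n + ((b :: t').map fibS).sum := by
        rw [← hsum]; simp
      rw [this]
      exact inv_step hf hch.1 hI

end FibProof

open FibProof in
/-- Ordering of the forward critical orbit of a Fibonacci map according to the leading
summand `S_n` of the Fibonacci sum expression of the iterate index, read mod 4. -/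
theorem fibonacci_orbit_ordering_by_leading_summand (f : ℝ → ℝ) (c : ℝ)
    (hf : IsFibonacciMap f c) (m m' n n' : ℕ) (l l' : List ℕ)
    (hl : IsFibExpansion l m) (hn : l.head? = some n)
    (hl' : IsFibExpansion l' m') (hn' : l'.head? = some n') :
    ((n % 4 = 1 ∨ n % 4 = 2) → f^[m] c < c) ∧
    ((n % 4 = 0 ∨ n % 4 = 3) → c < f^[m] c) ∧
    (n < n' → (n % 4 = 1 ∨ n % 4 = 2) → (n' % 4 = 1 ∨ n' % 4 = 2) →
      f^[m] c < f^[m'] c ∧ f^[m'] c < c) ∧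
    (n < n' → (n % 4 = 0 ∨ n % 4 = 3) → (n' % 4 = 0 ∨ n' % 4 = 3) →
      c < f^[m'] c ∧ f^[m'] c < f^[m] c) := by
  have hI : Inv f c m n := inv_main hf l n m hn hl.2.1 hl.2.2
  have hI' : Inv f c m' n' := inv_main hf l' n' m' hn' hl'.2.1 hl'.2.2
  obtain ⟨⟨hs1, hs2⟩, hup, hlow0, hlow1⟩ := hI
  obtain ⟨⟨hs1', hs2'⟩, hup', hlow0', hlow1'⟩ := hI'
  have hposchar : ∀ k : ℕ, (k % 4 = 0 ∨ k % 4 = 3) ↔ Pos k := fun k => Iff.rfl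
  have hnegchar : ∀ k : ℕ, (k % 4 = 1 ∨ k % 4 = 2) ↔ ¬ Pos k := by
    intro k; unfold Pos; omega
  refine ⟨?_, ?_, ?_, ?_⟩
  · intro h; exact hs2 ((hnegchar n).mp h)
  · intro h; exact hs1 ((hposchar n).mp h)
  · -- both negative class
    intro hlt h1 h2
    have hcm : f^[m] c < c := hs2 ((hnegchar n).mp h1)
    have hcm' : f^[m'] c < c := hs2' ((hnegchar n').mp h2)
    have hn1 : 1 ≤ n := by
      rcases h1 with h | h <;> omega
    have hkey : |f^[m'] c - c| < |f^[m] c - c| := by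
      calc |f^[m'] c - c| ≤ |gam f c n' - c| := hup'
        _ ≤ |gam f c (n+1) - c| := gam_abs_anti hf (by omega) (by omega)
        _ < |f^[m] c - c| := hlow1 hn1
    rw [abs_of_neg (by linarith), abs_of_neg (by linarith)] at hkey
    exact ⟨by linarith, hcm'⟩
  · -- both positive class
    intro hlt h1 h2
    have hcm : c < f^[m] c := hs1 ((hposchar n).mp h1)
    have hcm' : c < f^[m'] c := hs1' ((hposchar n').mp h2)
    have hkey : |f^[m'] c - c| < |f^[m] c - c| := by
      rcases Nat.eq_zero_or_pos n with hn0 | hn1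
      · subst hn0
        have hn3 : 3 ≤ n' := by
          rcases h2 with h | h <;> omega
        calc |f^[m'] c - c| ≤ |gam f c n' - c| := hup'
          _ ≤ |gam f c 3 - c| := gam_abs_anti hf (by omega) hn3
          _ < |f^[m] c - c| := hlow0 rfl
      · calc |f^[m'] c - c| ≤ |gam f c n' - c| := hup'
          _ ≤ |gam f c (n+1) - c| := gam_abs_anti hf (by omega) (by omega)
          _ < |f^[m] c - c| := hlow1 hn1
    rw [abs_of_pos (by linarith), abs_of_pos (by linarith)] at hkey
    exact ⟨hcm', by linarith⟩
end
end

section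
/- Let f be a Fibonacci map. Let S = S_{k_1}+S_{k_2}+⋯+S_{k_{i_0}} be a Fibonacci sum expression (so k_{i+1} ≥ k_i+2), and let j, j′ satisfy k_{i_0}+2 ≤ j < j′. Then: if i_0 is odd, |c_{S+S_j}| < |c_{S+S_{j′}}| < |c_S|; and if i_0 is even, |c_{S+S_j}| > |c_{S+S_{j′}}| > |c_S|. -/
noncomputable section

open Set

namespace FibDev

/-! ### fibS basics -/

lemma fibS_pos (n : ℕ) : 0 < fibS n := by
  induction n using Nat.strong_induction_on with
  | _ n ih =>
    match n with
    | 0 => simp [fibS]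
    | 1 => simp [fibS]
    | n + 2 =>
      have h1 := ih (n+1) (by omega)
      have h2 := ih n (by omega)
      simp [fibS]; omega

lemma fibS_lt_succ (n : ℕ) : fibS n < fibS (n+1) := by
  match n with
  | 0 => simp [fibS]
  | n + 1 =>
    have := fibS_pos n
    show fibS (n+1) < fibS (n+2)
    simp [fibS]; omega

lemma fibS_strictMono : StrictMono fibS :=
  strictMono_nat_of_lt_succ fibS_lt_succ

lemma fibS_mono : Monotone fibS := fibS_strictMono.monotone

lemma one_le_fibS (n : ℕ) : 1 ≤ fibS n := fibS_pos n

lemma lt_fibS_succ_self (n : ℕ) : n < fibS (n+1) := by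
  have h : ∀ m, m + 1 ≤ fibS m := by
    intro m
    induction m with
    | zero => simp [fibS]
    | succ k ih =>
      have := fibS_lt_succ k
      omega
  have := h (n+1)
  omega

lemma fibS_add_two (n : ℕ) : fibS (n+2) = fibS (n+1) + fibS n := rfl

/-! ### context -/

variable {f : ℝ → ℝ} {c : ℝ}

section

variable (hf : IsFibonacciMap f c)
include hf

lemma hcont : ContinuousOn f (Icc 0 1) := hf.1.1
lemma hmaps : MapsTo f (Icc 0 1) (Icc 0 1) := hf.1.2.1
lemma hf0 : f 0 = 0 := hf.1.2.2.1
lemma hf1 : f 1 = 0 := hf.1.2.2.2.1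
lemma hcmem : c ∈ Ioo (0:ℝ) 1 := hf.1.2.2.2.2.1
lemma hmono : StrictMonoOn f (Icc 0 c) := hf.1.2.2.2.2.2.1
lemma hanti : StrictAntiOn f (Icc c 1) := hf.1.2.2.2.2.2.2
lemma hsym : SymmetricAbout f c := hf.2.1
lemma hcut (i : ℕ) : IsLeast {k | fibS i ≤ k ∧
    ({x | x ∈ Set.Icc (0 : ℝ) 1 ∧ f^[k] x = c}).Nonempty ∧
    preimDist f c k < preimDist f c (fibS i)} (fibS (i + 1)) := hf.2.2.2 i

lemma chalf : c = 1/2 := by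
  have h0 : (0:ℝ) ∈ Icc (0:ℝ) 1 := ⟨le_refl _, by norm_num⟩
  have h1 : (1:ℝ) ∈ Icc (0:ℝ) 1 := ⟨by norm_num, le_refl _⟩
  have hc := hcmem hf
  obtain ⟨hc0, hc1⟩ := hc
  rcases lt_trichotomy c (1/2) with h | h | h
  · exfalso
    have h2c : 2*c - 0 ∈ Icc (0:ℝ) 1 := ⟨by linarith, by linarith⟩
    have heq := hsym hf 0 h0 h2c
    rw [hf0 hf] at heq
    have hmem1 : 2*c - 0 ∈ Icc c 1 := ⟨by linarith, by linarith⟩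
    have hmem2 : (1:ℝ) ∈ Icc c 1 := ⟨by linarith, le_refl _⟩
    have hgt : f 1 < f (2*c - 0) := hanti hf hmem1 hmem2 (by linarith)
    rw [hf1 hf] at hgt; linarith
  · exact h
  · exfalso
    have h2c : 2*c - 1 ∈ Icc (0:ℝ) 1 := ⟨by linarith, by linarith⟩
    have heq := hsym hf 1 h1 h2c
    rw [hf1 hf] at heq
    have hmem1 : (0:ℝ) ∈ Icc 0 c := ⟨le_refl _, by linarith⟩
    have hmem2 : 2*c - 1 ∈ Icc 0 c := ⟨by linarith, by linarith⟩
    have hgt : f 0 < f (2*c - 1) := hmono hf hmem1 hmem2 (by linarith)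
    rw [hf0 hf] at hgt; linarith

end

section
variable {f : ℝ → ℝ} {c : ℝ}
variable (hf : IsFibonacciMap f c)
include hf

/-- preimage set -/
def P (f : ℝ → ℝ) (c : ℝ) (n : ℕ) : Set ℝ := {x | x ∈ Icc (0:ℝ) 1 ∧ f^[n] x = c}

omit hf in
lemma preimDist_eq (n : ℕ) : preimDist f c n = sInf ((fun x => |x - c|) '' P f c n) := rfl

lemma mapsTo_iter (n : ℕ) : MapsTo (f^[n]) (Icc (0:ℝ) 1) (Icc (0:ℝ) 1) :=
  (hmaps hf).iterate n

lemma contIter (n : ℕ) : ContinuousOn (f^[n]) (Icc (0:ℝ) 1) := by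
  induction n with
  | zero => simpa using continuousOn_id
  | succ k ih =>
    rw [Function.iterate_succ']
    exact (hcont hf).comp ih (mapsTo_iter hf k)

lemma P_compact (n : ℕ) : IsCompact (P f c n) := by
  have hclosed : IsClosed (P f c n) := by
    have : P f c n = Icc (0:ℝ) 1 ∩ (f^[n]) ⁻¹' {c} := by
      ext x
      simp only [P, Set.mem_setOf_eq, Set.mem_inter_iff, Set.mem_preimage,
        Set.mem_singleton_iff]
    rw [this]
    exact (contIter hf n).preimage_isClosed_of_isClosed isClosed_Icc isClosed_singleton
  exact (isCompact_Icc).of_isClosed_subset hclosed (fun x hx => hx.1)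

omit hf in
lemma preimDist_nonneg (n : ℕ) : 0 ≤ preimDist f c n := by
  apply Real.sInf_nonneg
  rintro x ⟨y, -, rfl⟩
  exact abs_nonneg _

omit hf in
lemma preimDist_le {n : ℕ} {x : ℝ} (hx : x ∈ P f c n) : preimDist f c n ≤ |x - c| := by
  apply csInf_le
  · exact ⟨0, by rintro z ⟨y, -, rfl⟩; exact abs_nonneg _⟩
  · exact ⟨x, hx, rfl⟩

lemma preimDist_attained {n : ℕ} (hn : (P f c n).Nonempty) :
    ∃ z ∈ P f c n, |z - c| = preimDist f c n := by
  have himg : IsCompact ((fun x => |x - c|) '' P f c n) :=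
    (P_compact hf n).image_of_continuousOn ((continuous_abs.comp (continuous_id.sub continuous_const)).continuousOn)
  have hne : ((fun x => |x - c|) '' P f c n).Nonempty := hn.image _
  have := himg.sInf_mem hne
  obtain ⟨z, hz, hz2⟩ := this
  exact ⟨z, hz, hz2⟩

/-- mirror -/
lemma mirror_mem {n : ℕ} (hn : 1 ≤ n) {x : ℝ} (hx : x ∈ P f c n) : 1 - x ∈ P f c n := by
  have hc2 : c = 1/2 := chalf hf
  obtain ⟨hxI, hxn⟩ := hx
  have hmir : 1 - x ∈ Icc (0:ℝ) 1 := ⟨by linarith [hxI.2], by linarith [hxI.1]⟩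
  have hfsym : f (1 - x) = f x := by
    have h2cx : 2*c - x ∈ Icc (0:ℝ) 1 := by
      rw [hc2]; exact ⟨by linarith [hxI.2], by linarith [hxI.1]⟩
    have heq := hsym hf x hxI h2cx
    have : 2*c - x = 1 - x := by rw [hc2]; ring
    rwa [this] at heq
  constructor
  · exact hmir
  · obtain ⟨m, rfl⟩ := Nat.exists_eq_add_of_le hn
    have e1 : f^[1+m] (1-x) = f^[m] (f (1-x)) := by
      rw [add_comm]; exact Function.iterate_succ_apply f m (1-x)
    have e2 : f^[1+m] x = f^[m] (f x) := by
      rw [add_comm]; exact Function.iterate_succ_apply f m x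
    rw [e1, hfsym, ← e2]
    exact hxn

end

section
variable {f : ℝ → ℝ} {c : ℝ}
variable (hf : IsFibonacciMap f c)
include hf

lemma symIter {n : ℕ} (hn : 1 ≤ n) {z : ℝ} (hz : z ∈ Icc (0:ℝ) 1) :
    f^[n] (1 - z) = f^[n] z := by
  have hc2 : c = 1/2 := chalf hf
  have hfsym : f (1 - z) = f z := by
    have h2cz : 2*c - z ∈ Icc (0:ℝ) 1 := by
      rw [hc2]; exact ⟨by linarith [hz.2], by linarith [hz.1]⟩
    have heq := hsym hf z hz h2cz
    have : 2*c - z = 1 - z := by rw [hc2]; ring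
    rwa [this] at heq
  obtain ⟨m, rfl⟩ := Nat.exists_eq_add_of_le hn
  have e1 : f^[1+m] (1-z) = f^[m] (f (1-z)) := by
    rw [add_comm]; exact Function.iterate_succ_apply f m (1-z)
  have e2 : f^[1+m] z = f^[m] (f z) := by
    rw [add_comm]; exact Function.iterate_succ_apply f m z
  rw [e1, hfsym, ← e2]

lemma D_lt (i : ℕ) :
    preimDist f c (fibS (i+1)) < preimDist f c (fibS i) := (hcut hf i).1.2.2

lemma D_pos (i : ℕ) : 0 < preimDist f c (fibS i) :=
  lt_of_le_of_lt (preimDist_nonneg (fibS (i+1))) (D_lt hf i)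

lemma D_anti_aux (i d : ℕ) :
    preimDist f c (fibS (i + d + 1)) < preimDist f c (fibS i) := by
  induction d with
  | zero => exact D_lt hf i
  | succ k ih => exact lt_trans (by exact_mod_cast D_lt hf (i+k+1)) ih

lemma D_anti {i i' : ℕ} (h : i < i') :
    preimDist f c (fibS i') < preimDist f c (fibS i) := by
  have : i' = i + (i' - i - 1) + 1 := by omega
  rw [this]
  exact D_anti_aux hf i _

lemma D_anti_le {i i' : ℕ} (h : i ≤ i') :
    preimDist f c (fibS i') ≤ preimDist f c (fibS i) := by
  rcases eq_or_lt_of_le h with rfl | h'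
  · exact le_refl _
  · exact le_of_lt (D_anti hf h')

lemma hfc : c < f c := by
  have hc := hcmem hf
  have hP2 : (P f c 2).Nonempty := by
    have := (hcut hf 0).1.2.1
    simpa [P, fibS] using this
  have hd2 : preimDist f c 2 < preimDist f c 1 := by
    have := (hcut hf 0).1.2.2
    simpa [fibS] using this
  have hd1pos : 0 < preimDist f c 1 :=
    lt_of_le_of_lt (preimDist_nonneg 2) hd2
  -- P 1 nonempty
  have hP1 : (P f c 1).Nonempty := by
    by_contra hemp
    rw [Set.not_nonempty_iff_eq_empty] at hemp
    have : preimDist f c 1 = 0 := by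
      rw [preimDist_eq, hemp, Set.image_empty, Real.sInf_empty]
    linarith
  obtain ⟨x, hxI, hx1⟩ := hP1
  simp only [Function.iterate_one] at hx1
  by_contra hle
  push_neg at hle
  -- f x ≤ f c for all x in Icc 0 1
  have hmax : f x ≤ f c := by
    rcases le_total x c with h | h
    · rcases eq_or_lt_of_le h with rfl | h'
      · exact le_refl _
      · exact le_of_lt ((hmono hf) ⟨hxI.1, h⟩ ⟨hc.1.le, le_refl _⟩ h')
    · rcases eq_or_lt_of_le h with rfl | h'
      · exact le_refl _
      · exact le_of_lt ((hanti hf) ⟨le_refl _, hc.2.le⟩ ⟨h, hxI.2⟩ h')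
  have hfcc : f c = c := le_antisymm hle (hx1 ▸ hmax)
  -- then x = c, so c ∈ P 1, d_1 = 0
  have hcP : c ∈ P f c 1 := by
    refine ⟨⟨hc.1.le, hc.2.le⟩, ?_⟩
    simpa using hfcc
  have : preimDist f c 1 ≤ 0 := by
    have := preimDist_le (f := f) (c := c) hcP
    simpa using this
  linarith

lemma exists_pre (n : ℕ) (hn : 1 ≤ n) : ∃ p ∈ Icc (0:ℝ) c, f^[n] p = c := by
  have hc := hcmem hf
  induction n with
  | zero => omega
  | succ k ih =>
    rcases Nat.eq_or_lt_of_le hn with h1 | h2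
    · -- n = 1
      have : c ∈ Icc (f 0) (f c) := by
        rw [hf0 hf]; exact ⟨hc.1.le, (hfc hf).le⟩
      have hsub := intermediate_value_Icc hc.1.le ((hcont hf).mono (fun x hx => ⟨hx.1, le_trans hx.2 hc.2.le⟩))
      obtain ⟨p, hp, hpc⟩ := hsub this
      refine ⟨p, hp, ?_⟩
      rw [← h1]
      simpa using hpc
    · have hk : 1 ≤ k := by omega
      obtain ⟨p, hpI, hpc⟩ := ih hk
      -- find q ∈ [0, c] with f q = p
      have hmem : p ∈ Icc (f 0) (f c) := by
        rw [hf0 hf]; exact ⟨hpI.1, le_trans hpI.2 (hfc hf).le⟩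
      have hsub := intermediate_value_Icc hc.1.le ((hcont hf).mono (fun x hx => ⟨hx.1, le_trans hx.2 hc.2.le⟩))
      obtain ⟨q, hq, hqp⟩ := hsub hmem
      refine ⟨q, hq, ?_⟩
      rw [Function.iterate_succ_apply, hqp, hpc]

lemma P_nonempty (n : ℕ) (hn : 1 ≤ n) : (P f c n).Nonempty := by
  obtain ⟨p, hpI, hpc⟩ := exists_pre hf n hn
  have hc := hcmem hf
  exact ⟨p, ⟨hpI.1, le_trans hpI.2 hc.2.le⟩, hpc⟩

/-- B7 : cleanness -/
lemma clean {i m : ℕ} (hm : 1 ≤ m) (hlt : m < fibS (i+1)) :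
    preimDist f c (fibS i) ≤ preimDist f c m := by
  induction i with
  | zero =>
    have h2 : fibS (0+1) = 2 := rfl
    have : m = 1 := by omega
    subst this
    have h1 : fibS 0 = 1 := rfl
    rw [h1]
  | succ k ih =>
    rcases lt_or_ge m (fibS (k+1)) with h | h
    · exact le_trans (D_lt hf k).le (ih h)
    · by_contra hcon
      push_neg at hcon
      have hmem : m ∈ {k' | fibS (k+1) ≤ k' ∧
          ({x | x ∈ Set.Icc (0 : ℝ) 1 ∧ f^[k'] x = c}).Nonempty ∧
          preimDist f c k' < preimDist f c (fibS (k+1))} :=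
        ⟨h, P_nonempty hf m hm, hcon⟩
      have := (hcut hf (k+1)).2 hmem
      omega

lemma orbit_ne_c {T : ℕ} (hT : 1 ≤ T) : f^[T] c ≠ c := by
  intro heq
  have hc := hcmem hf
  have hcP : c ∈ P f c T := ⟨⟨hc.1.le, hc.2.le⟩, heq⟩
  have h1 : preimDist f c T ≤ 0 := by
    have := preimDist_le (f := f) (c := c) hcP
    simpa using this
  have h2 : preimDist f c (fibS T) ≤ preimDist f c T :=
    clean hf hT (lt_fibS_succ_self T)
  have := D_pos hf T
  linarith

/-- both mirror preimage points -/
lemma z_mem_left (i : ℕ) : c - preimDist f c (fibS i) ∈ P f c (fibS i) ∧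
    c + preimDist f c (fibS i) ∈ P f c (fibS i) := by
  obtain ⟨z, hz, hzd⟩ := preimDist_attained hf (P_nonempty hf (fibS i) (one_le_fibS i))
  have hc2 : c = 1/2 := chalf hf
  have hmir := mirror_mem hf (one_le_fibS i) hz
  rcases abs_cases (z - c) with ⟨h1, _⟩ | ⟨h1, _⟩
  · -- z = c + d
    have hzc : z = c + preimDist f c (fibS i) := by rw [← hzd, h1]; ring
    have hzm : 1 - z = c - preimDist f c (fibS i) := by rw [hzc, hc2]; ring
    constructor
    · rw [← hzm]; exact hmir
    · rw [← hzc]; exact hz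
  · have hzc : z = c - preimDist f c (fibS i) := by rw [← hzd, h1]; ring
    have hzm : 1 - z = c + preimDist f c (fibS i) := by rw [hzc, hc2]; ring
    constructor
    · rw [← hzc]; exact hz
    · rw [← hzm]; exact hmir

lemma D_le_half (i : ℕ) : preimDist f c (fibS i) ≤ 1/2 := by
  have hc2 : c = 1/2 := chalf hf
  have h := (z_mem_left hf i).1
  have h0 := h.1.1
  linarith [hc2, h0]

end

section
variable {f : ℝ → ℝ} {c : ℝ}
variable (hf : IsFibonacciMap f c)
include hf

lemma mono_or_anti : ∀ (n : ℕ) (u v : ℝ), 0 ≤ u → v ≤ 1 →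
    (∀ x, u < x → x < v → ∀ m, m < n → f^[m] x ≠ c) →
    StrictMonoOn (f^[n]) (Icc u v) ∨ StrictAntiOn (f^[n]) (Icc u v) := by
  intro n
  induction n with
  | zero =>
    intro u v _ _ _
    left
    intro x _ y _ hxy
    simpa using hxy
  | succ n ih =>
    intro u v hu hv hfree
    rcases le_or_gt v u with hvu | huv
    · left; intro x hx y hy hxy; exfalso
      have := hx.1; have := hx.2; have := hy.1; have := hy.2; linarith
    have hIcc01 : Icc u v ⊆ Icc (0:ℝ) 1 := fun x hx => ⟨le_trans hu hx.1, le_trans hx.2 hv⟩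
    have hcf : ContinuousOn f (Icc u v) := (hcont hf).mono hIcc01
    have hcnot : c ∉ Ioo u v := by
      intro hc'
      exact hfree c hc'.1 hc'.2 0 (Nat.succ_pos n) (by simp)
    have hc := hcmem hf
    rcases le_or_gt c u with hcu | huc
    · -- decreasing branch : [u,v] ⊆ [c,1]
      have hA : StrictAntiOn f (Icc u v) :=
        (hanti hf).mono (fun x hx => ⟨le_trans hcu hx.1, le_trans hx.2 hv⟩)
      have hlt : f v < f u := hA ⟨le_refl _, huv.le⟩ ⟨huv.le, le_refl _⟩ huv
      have hmapsTo : MapsTo f (Icc u v) (Icc (f v) (f u)) := by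
        intro x hx
        exact ⟨hA.antitoneOn hx ⟨huv.le, le_refl _⟩ hx.2, hA.antitoneOn ⟨le_refl _, huv.le⟩ hx hx.1⟩
      have hfv0 : 0 ≤ f v := (hmaps hf (hIcc01 ⟨huv.le, le_refl _⟩)).1
      have hfu1 : f u ≤ 1 := (hmaps hf (hIcc01 ⟨le_refl _, huv.le⟩)).2
      have hfree' : ∀ y, f v < y → y < f u → ∀ m, m < n → f^[m] y ≠ c := by
        intro y hy1 hy2 m hm
        obtain ⟨x, hxmem, hxy⟩ := intermediate_value_Icc' huv.le hcf ⟨hy1.le, hy2.le⟩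
        have hxu : x ≠ u := by rintro rfl; exact absurd hxy (by linarith)
        have hxv : x ≠ v := by rintro rfl; exact absurd hxy (by linarith)
        have h1 : u < x := lt_of_le_of_ne hxmem.1 (Ne.symm hxu)
        have h2 : x < v := lt_of_le_of_ne hxmem.2 hxv
        have := hfree x h1 h2 (m+1) (by omega)
        rw [Function.iterate_succ_apply, hxy] at this
        exact this
      rcases ih (f v) (f u) hfv0 hfu1 hfree' with hM | hN
      · right
        rw [Function.iterate_succ]
        exact hM.comp_strictAntiOn hA hmapsTo
      · left
        rw [Function.iterate_succ]
        exact hN.comp hA hmapsTo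
    · have hvc : v ≤ c := by
        by_contra hcon
        push_neg at hcon
        exact hcnot ⟨huc, hcon⟩
      have hM : StrictMonoOn f (Icc u v) :=
        (hmono hf).mono (fun x hx => ⟨le_trans hu hx.1, le_trans hx.2 hvc⟩)
      have hlt : f u < f v := hM ⟨le_refl _, huv.le⟩ ⟨huv.le, le_refl _⟩ huv
      have hmapsTo : MapsTo f (Icc u v) (Icc (f u) (f v)) := by
        intro x hx
        exact ⟨hM.monotoneOn ⟨le_refl _, huv.le⟩ hx hx.1, hM.monotoneOn hx ⟨huv.le, le_refl _⟩ hx.2⟩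
      have hfu0 : 0 ≤ f u := (hmaps hf (hIcc01 ⟨le_refl _, huv.le⟩)).1
      have hfv1 : f v ≤ 1 := (hmaps hf (hIcc01 ⟨huv.le, le_refl _⟩)).2
      have hfree' : ∀ y, f u < y → y < f v → ∀ m, m < n → f^[m] y ≠ c := by
        intro y hy1 hy2 m hm
        obtain ⟨x, hxmem, hxy⟩ := intermediate_value_Icc huv.le hcf ⟨hy1.le, hy2.le⟩
        have hxu : x ≠ u := by rintro rfl; exact absurd hxy (by linarith)
        have hxv : x ≠ v := by rintro rfl; exact absurd hxy (by linarith)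
        have h1 : u < x := lt_of_le_of_ne hxmem.1 (Ne.symm hxu)
        have h2 : x < v := lt_of_le_of_ne hxmem.2 hxv
        have := hfree x h1 h2 (m+1) (by omega)
        rw [Function.iterate_succ_apply, hxy] at this
        exact this
      rcases ih (f u) (f v) hfu0 hfv1 hfree' with hM' | hN'
      · left
        rw [Function.iterate_succ]
        exact hM'.comp hM hmapsTo
      · right
        rw [Function.iterate_succ]
        exact hN'.comp_strictMonoOn hM hmapsTo

lemma no_precrit {m i : ℕ} (hm1 : 1 ≤ m) (hmlt : m < fibS (i+1)) {x : ℝ}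
    (hx : x ∈ Icc (0:ℝ) 1) (hxd : |x - c| < preimDist f c (fibS i)) : f^[m] x ≠ c := by
  intro h
  have hxP : x ∈ P f c m := ⟨hx, h⟩
  have h1 := preimDist_le (f := f) (c := c) hxP
  have h2 := clean hf hm1 hmlt
  linarith

end

section
variable {f : ℝ → ℝ} {c : ℝ}
variable (hf : IsFibonacciMap f c)
include hf

lemma c_mem_Icc : c ∈ Icc (0:ℝ) 1 := ⟨(hcmem hf).1.le, (hcmem hf).2.le⟩

lemma orbit_mem (n : ℕ) : f^[n] c ∈ Icc (0:ℝ) 1 := mapsTo_iter hf n (c_mem_Icc hf)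

lemma g_z_left (i : ℕ) : f^[fibS i] (c - preimDist f c (fibS i)) = c := (z_mem_left hf i).1.2

lemma g_z_right (i : ℕ) : f^[fibS i] (c + preimDist f c (fibS i)) = c := (z_mem_left hf i).2.2

/-- strict mono or anti on the right window [c, c + D_k] -/
lemma window_right (k : ℕ) :
    StrictMonoOn (f^[fibS k]) (Icc c (c + preimDist f c (fibS k))) ∨
    StrictAntiOn (f^[fibS k]) (Icc c (c + preimDist f c (fibS k))) := by
  have hv : c + preimDist f c (fibS k) ≤ 1 := by
    have := D_le_half hf k
    have := chalf hf
    linarith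
  apply mono_or_anti hf (fibS k) c (c + preimDist f c (fibS k)) (hcmem hf).1.le hv
  intro x hx1 hx2 m hm hfx
  rcases Nat.eq_zero_or_pos m with rfl | hm1
  · simp at hfx; exact absurd hfx (by linarith)
  · have hk0 : k ≠ 0 := by
      rintro rfl
      have h1 : fibS 0 = 1 := rfl
      omega
    obtain ⟨i, rfl⟩ : ∃ i, k = i + 1 := ⟨k - 1, by omega⟩
    refine no_precrit hf hm1 hm ?_ ?_ hfx
    · constructor
      · linarith [(hcmem hf).1]
      · have := D_le_half hf (i+1)
        have := chalf hf
        linarith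
    · rw [abs_of_pos (by linarith)]
      have := D_lt hf i
      linarith

/-- the magnitude decrease property of the right window -/
lemma win (k : ℕ) {x y : ℝ} (hx : c ≤ x) (hxy : x < y)
    (hy : y ≤ c + preimDist f c (fibS k)) :
    |f^[fibS k] y - c| < |f^[fibS k] x - c| := by
  set D := preimDist f c (fibS k) with hD
  have hxm : x ∈ Icc c (c + D) := ⟨hx, by linarith⟩
  have hym : y ∈ Icc c (c + D) := ⟨by linarith, hy⟩
  have hzm : c + D ∈ Icc c (c + D) := ⟨by linarith [D_pos hf k], le_refl _⟩
  have hgz : f^[fibS k] (c + D) = c := g_z_right hf k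
  rcases window_right hf k with hM | hA
  · -- increasing: values ≤ c
    have h1 : f^[fibS k] x < f^[fibS k] y := hM hxm hym hxy
    have h2 : f^[fibS k] y ≤ c := by
      rcases eq_or_lt_of_le hy with rfl | hlt
      · rw [hgz]
      · have := hM hym hzm hlt
        rw [hgz] at this; linarith
    rw [abs_of_nonpos (by linarith), abs_of_nonpos (by linarith)]
    linarith
  · have h1 : f^[fibS k] y < f^[fibS k] x := hA hxm hym hxy
    have h2 : c ≤ f^[fibS k] y := by
      rcases eq_or_lt_of_le hy with rfl | hlt
      · rw [hgz]
      · have := hA hym hzm hlt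
        rw [hgz] at this; linarith
    rw [abs_of_nonneg (by linarith), abs_of_nonneg (by linarith)]
    linarith

/-- lower bound : D_i < |c_{S_{i+1}}| -/
lemma L1 (i : ℕ) : preimDist f c (fibS i) < |f^[fibS (i+1)] c - c| := by
  set D := fun j => preimDist f c (fibS j) with hD
  have hD10 := D_lt hf i
  have hD21 := D_lt hf (i+1)
  have hDpos := D_pos hf (i+2)
  have hchalf := chalf hf
  have hDhalf := D_le_half hf i
  -- window [c - D i, c]
  have hwin : StrictMonoOn (f^[fibS (i+1)]) (Icc (c - D i) c) ∨
      StrictAntiOn (f^[fibS (i+1)]) (Icc (c - D i) c) := by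
    apply mono_or_anti hf (fibS (i+1)) (c - D i) c (by linarith) (by linarith)
    intro x hx1 hx2 m hm hfx
    rcases Nat.eq_zero_or_pos m with rfl | hm1
    · simp at hfx; exact absurd hfx (by linarith)
    · refine no_precrit hf hm1 hm ⟨by linarith, by linarith⟩ ?_ hfx
      rw [abs_of_neg (by linarith)]
      linarith
  have hm1 : c - D i ≤ c - D (i+1) := by simp only [hD]; linarith
  have ha : (c - D (i+1)) ∈ Icc (c - D i) c := ⟨hm1, by linarith [D_pos hf (i+1)]⟩
  have hb : (c - D (i+2)) ∈ Icc (c - D i) c := ⟨by linarith, by linarith⟩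
  have hcm : c ∈ Icc (c - D i) c := ⟨by linarith [D_pos hf i], le_refl _⟩
  have hab : c - D (i+1) < c - D (i+2) := by linarith
  have hbc : c - D (i+2) < c := by linarith
  have hga : f^[fibS (i+1)] (c - D (i+1)) = c := g_z_left hf (i+1)
  -- w := image of c - D (i+2)
  set w := f^[fibS (i+1)] (c - D (i+2)) with hw
  have hwP : w ∈ P f c (fibS i) := by
    constructor
    · exact mapsTo_iter hf (fibS (i+1)) ⟨by linarith, by linarith⟩
    · have h1 : f^[fibS (i+2)] (c - D (i+2)) = c := g_z_left hf (i+2)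
      have h2 : fibS (i+2) = fibS i + fibS (i+1) := by
        rw [fibS_add_two]; ring
      rw [h2, Function.iterate_add_apply] at h1
      exact h1
  have hwd : D i ≤ |w - c| := preimDist_le (f := f) (c := c) hwP
  rcases hwin with hM | hA
  · have h1 : c < w := by
      have := hM ha hb hab
      rwa [hga] at this
    have h2 : w < f^[fibS (i+1)] c := hM hb hcm hbc
    rw [abs_of_pos (by linarith)]
    rw [abs_of_pos (by linarith)] at hwd
    linarith
  · have h1 : w < c := by
      have := hA ha hb hab
      rwa [hga] at this
    have h2 : f^[fibS (i+1)] c < w := hA hb hcm hbc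
    rw [abs_of_neg (by linarith)]
    rw [abs_of_neg (by linarith)] at hwd
    linarith

/-- upper bound : |c_{S_{i+2}}| < D_i -/
lemma U1 (i : ℕ) : |f^[fibS (i+2)] c - c| < preimDist f c (fibS i) := by
  by_contra hcon
  push_neg at hcon
  set D := fun j => preimDist f c (fibS j) with hD
  have hD10 := D_lt hf i
  have hD21 := D_lt hf (i+1)
  have hDpos0 := D_pos hf i
  have hDpos2 := D_pos hf (i+2)
  have hchalf := chalf hf
  have hDhalf := D_le_half hf i
  set cS := f^[fibS (i+2)] c with hcS
  have hne : cS ≠ c := orbit_ne_c hf (one_le_fibS _)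
  set p : ℝ := if c < cS then c + D i else c - D i with hp
  have hpP : p ∈ P f c (fibS i) := by
    rw [hp]; split
    · exact (z_mem_left hf i).2
    · exact (z_mem_left hf i).1
  have hpne : p ≠ c := by
    rw [hp]; split <;> intro h <;> [linarith; linarith]
  -- IVT on [c - D (i+2), c]
  have hga : f^[fibS (i+2)] (c - D (i+2)) = c := g_z_left hf (i+2)
  have hmle : c - D (i+2) ≤ c := by linarith
  have hcontg : ContinuousOn (f^[fibS (i+2)]) (Icc (c - D (i+2)) c) := by
    apply (contIter hf (fibS (i+2))).mono
    intro x hx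
    constructor
    · have := D_le_half hf (i+2); linarith [hx.1]
    · linarith [hx.2]
  have hIVT := intermediate_value_uIcc (a := c - D (i+2)) (b := c)
      (f := f^[fibS (i+2)]) (by rwa [Set.uIcc_of_le hmle])
  have hpmem : p ∈ uIcc (f^[fibS (i+2)] (c - D (i+2))) (f^[fibS (i+2)] c) := by
    rw [hga, ← hcS]
    rcases lt_or_gt_of_ne hne with h1 | h1
    · -- cS < c : p = c - D i
      have hpe : p = c - D i := by rw [hp, if_neg (by linarith)]
      have habs : c - cS ≥ D i := by
        have heq : |cS - c| = c - cS := by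
          rw [abs_of_neg (by linarith)]; ring
        linarith [hcon, heq.symm.le]
      rw [Set.uIcc_of_ge h1.le, hpe]
      exact ⟨by linarith, by linarith⟩
    · have hpe : p = c + D i := by rw [hp, if_pos (by linarith)]
      have habs : cS - c ≥ D i := by
        have : |cS - c| = cS - c := abs_of_pos (by linarith)
        linarith [hcon, this.symm.le]
      rw [Set.uIcc_of_le h1.le, hpe]
      exact ⟨by linarith, by linarith⟩
  obtain ⟨β, hβmem, hβ⟩ := hIVT hpmem
  rw [Set.uIcc_of_le hmle] at hβmem
  have hβne : β ≠ c - D (i+2) := by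
    rintro rfl
    rw [hga] at hβ
    exact hpne hβ.symm
  have hβlt : |β - c| < D (i+2) := by
    rw [abs_of_nonpos (by linarith [hβmem.2])]
    have := hβmem.1
    have : c - D (i+2) < β := lt_of_le_of_ne hβmem.1 (Ne.symm hβne)
    linarith
  -- β is a preimage of order fibS i + fibS (i+2)
  have hβI : β ∈ Icc (0:ℝ) 1 := by
    constructor
    · have := D_le_half hf (i+2); linarith [hβmem.1]
    · linarith [hβmem.2]
  have hβP : β ∈ P f c (fibS i + fibS (i+2)) := by
    refine ⟨hβI, ?_⟩
    rw [Function.iterate_add_apply, hβ]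
    exact hpP.2
  have hdm : preimDist f c (fibS i + fibS (i+2)) < D (i+2) := by
    have := preimDist_le (f := f) (c := c) hβP
    linarith
  have hmem : (fibS i + fibS (i+2)) ∈ {k | fibS (i+2) ≤ k ∧
      ({x | x ∈ Set.Icc (0 : ℝ) 1 ∧ f^[k] x = c}).Nonempty ∧
      preimDist f c k < preimDist f c (fibS (i+2))} := by
    refine ⟨by omega, ⟨β, hβP⟩, hdm⟩
  have hleast := (hcut hf (i+2)).2 hmem
  have h5 : fibS (i+2+1) = fibS (i+2) + fibS (i+1) := by rw [fibS_add_two]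
  have h4 : fibS i < fibS (i+1) := fibS_lt_succ i
  omega

/-- |c_{S_m}| strictly decreasing from m = 2 on -/
lemma dec_step (i : ℕ) : |f^[fibS (i+3)] c - c| < |f^[fibS (i+2)] c - c| := by
  have h1 := U1 hf (i+1)
  have h2 := L1 hf (i+1)
  linarith

lemma dec_chain {j j' : ℕ} (hj : 2 ≤ j) (hjj' : j < j') :
    |f^[fibS j'] c - c| < |f^[fibS j] c - c| := by
  induction j' with
  | zero => omega
  | succ k ih =>
    rcases Nat.lt_succ_iff_lt_or_eq.mp hjj' with h | h
    · refine lt_trans ?_ (ih h)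
      obtain ⟨i, rfl⟩ : ∃ i, k = i + 2 := ⟨k - 2, by omega⟩
      exact dec_step hf i
    · subst h
      obtain ⟨i, rfl⟩ : ∃ i, j = i + 2 := ⟨j - 2, by omega⟩
      exact dec_step hf i

end

section
variable {f : ℝ → ℝ} {c : ℝ}
variable (hf : IsFibonacciMap f c)
include hf

lemma reflect_iterate (n T : ℕ) (hn : 1 ≤ n) :
    f^[n] (c + |f^[T] c - c|) = f^[n + T] c := by
  rcases le_or_gt c (f^[T] c) with h | h
  · rw [abs_of_nonneg (by linarith)]
    have : c + (f^[T] c - c) = f^[T] c := by ring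
    rw [this, Function.iterate_add_apply]
  · rw [abs_of_neg (by linarith)]
    have hz : f^[T] c ∈ Icc (0:ℝ) 1 := orbit_mem hf T
    have hchalf := chalf hf
    have : c + -(f^[T] c - c) = 1 - f^[T] c := by rw [hchalf]; ring
    rw [this, symIter hf hn hz, Function.iterate_add_apply]

lemma mu_pos (T : ℕ) (hT : 1 ≤ T) : 0 < |f^[T] c - c| := by
  rw [abs_pos, sub_ne_zero]
  exact orbit_ne_c hf hT

/-- AUX : |c_{sum((i+2)::t)}| < D_i  for admissible lists -/
lemma aux_bound : ∀ (t : List ℕ) (i : ℕ),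
    List.Chain' (fun a b => a + 2 ≤ b) ((i+2) :: t) →
    |f^[(((i+2) :: t).map fibS).sum] c - c| < preimDist f c (fibS i) := by
  intro t
  induction t with
  | nil =>
    intro i _
    simp only [List.map_cons, List.map_nil, List.sum_cons, List.sum_nil, add_zero]
    exact U1 hf i
  | cons k2 t' ih =>
    intro i hchain
    have hk2 : (i+2) + 2 ≤ k2 := List.isChain_cons_cons.mp hchain |>.1
    have hchain2 : List.Chain' (fun a b => a + 2 ≤ b) (k2 :: t') :=
      List.isChain_cons_cons.mp hchain |>.2
    obtain ⟨i2, rfl⟩ : ∃ i2, k2 = i2 + 2 := ⟨k2 - 2, by omega⟩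
    have hIH := ih i2 hchain2
    set T2 := (((i2+2) :: t').map fibS).sum with hT2
    have hT2pos : 1 ≤ T2 := by
      rw [hT2]
      simp only [List.map_cons, List.sum_cons]
      have := one_le_fibS (i2+2)
      omega
    have hmu2pos : 0 < |f^[T2] c - c| := mu_pos hf T2 hT2pos
    have hDle : preimDist f c (fibS i2) ≤ preimDist f c (fibS (i+2)) :=
      D_anti_le hf (by omega)
    -- the (i+2)-window
    have hwin := win hf (i+2) (x := c) (y := c + |f^[T2] c - c|)
      (le_refl c) (by linarith) (by linarith)
    rw [reflect_iterate hf (fibS (i+2)) T2 (one_le_fibS _)] at hwin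
    have hsum : ((((i+2)) :: (i2+2) :: t').map fibS).sum = fibS (i+2) + T2 := by
      simp only [List.map_cons, List.sum_cons, hT2]
    rw [hsum]
    calc |f^[fibS (i+2) + T2] c - c| < |f^[fibS (i+2)] c - c| := hwin
      _ < preimDist f c (fibS i) := U1 hf i

/-- upper bound for |c_{S_j}| in terms of D_{k1} -/
lemma muSj_lt {k1 j : ℕ} (hj : k1 + 2 ≤ j) :
    |f^[fibS j] c - c| < preimDist f c (fibS k1) := by
  obtain ⟨i, rfl⟩ : ∃ i, j = i + 2 := ⟨j - 2, by omega⟩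
  exact lt_of_lt_of_le (U1 hf i) (D_anti_le hf (by omega))

lemma main_ind : ∀ (t : List ℕ) (k1 : ℕ),
    List.Chain' (fun a b => a + 2 ≤ b) (k1 :: t) →
    ∀ K, (k1 :: t).getLast? = some K → ∀ j j', K + 2 ≤ j → j < j' →
    (Odd (k1 :: t).length →
      |f^[((k1 :: t).map fibS).sum + fibS j] c - c| <
        |f^[((k1 :: t).map fibS).sum + fibS j'] c - c| ∧
      |f^[((k1 :: t).map fibS).sum + fibS j'] c - c| <
        |f^[((k1 :: t).map fibS).sum] c - c|) ∧
    (Even (k1 :: t).length →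
      |f^[((k1 :: t).map fibS).sum] c - c| <
        |f^[((k1 :: t).map fibS).sum + fibS j'] c - c| ∧
      |f^[((k1 :: t).map fibS).sum + fibS j'] c - c| <
        |f^[((k1 :: t).map fibS).sum + fibS j] c - c|) := by
  intro t
  induction t with
  | nil =>
    intro k1 _ K hK j j' hj hjj'
    have hKk1 : K = k1 := by
      simp only [List.getLast?_singleton, Option.some_inj] at hK
      exact hK.symm
    subst hKk1
    constructor
    · intro _
      have hsum : (([K]).map fibS).sum = fibS K := by simp
      rw [hsum]
      have h2j : 2 ≤ j := by omega
      have hdec : |f^[fibS j'] c - c| < |f^[fibS j] c - c| := dec_chain hf h2j hjj'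
      have hjpos : 0 < |f^[fibS j'] c - c| := mu_pos hf _ (one_le_fibS _)
      have hjK : |f^[fibS j] c - c| < preimDist f c (fibS K) := muSj_lt hf hj
      have hw1 := win hf K (x := c + |f^[fibS j'] c - c|) (y := c + |f^[fibS j] c - c|)
        (by linarith) (by linarith) (by linarith)
      have hw2 := win hf K (x := c) (y := c + |f^[fibS j'] c - c|)
        (le_refl c) (by linarith) (by linarith)
      rw [reflect_iterate hf (fibS K) (fibS j) (one_le_fibS _),
        reflect_iterate hf (fibS K) (fibS j') (one_le_fibS _)] at hw1
      rw [reflect_iterate hf (fibS K) (fibS j') (one_le_fibS _)] at hw2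
      exact ⟨hw1, hw2⟩
    · intro h
      simp at h
  | cons k2 t' ih =>
    intro k1 hchain K hK j j' hj hjj'
    have hk2 : k1 + 2 ≤ k2 := List.isChain_cons_cons.mp hchain |>.1
    have hchain2 : List.Chain' (fun a b => a + 2 ≤ b) (k2 :: t') :=
      List.isChain_cons_cons.mp hchain |>.2
    have hK2 : (k2 :: t').getLast? = some K := by
      rwa [List.getLast?_cons_cons] at hK
    have hIH := ih k2 hchain2 K hK2 j j' hj hjj'
    set T2 := ((k2 :: t').map fibS).sum with hT2
    have hsum : (((k1) :: k2 :: t').map fibS).sum = fibS k1 + T2 := by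
      simp only [List.map_cons, List.sum_cons, hT2]
    -- positivity
    have hT2pos : 1 ≤ T2 := by
      rw [hT2]; simp only [List.map_cons, List.sum_cons]
      have := one_le_fibS k2; omega
    have hmuy : 0 < |f^[T2] c - c| := mu_pos hf T2 hT2pos
    have hmux : 0 < |f^[T2 + fibS j] c - c| := mu_pos hf _ (by have := one_le_fibS j; omega)
    have hmux' : 0 < |f^[T2 + fibS j'] c - c| := mu_pos hf _ (by have := one_le_fibS j'; omega)
    -- upper bounds via aux_bound
    obtain ⟨i2, rfl⟩ : ∃ i2, k2 = i2 + 2 := ⟨k2 - 2, by omega⟩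
    have hDle : preimDist f c (fibS i2) ≤ preimDist f c (fibS k1) :=
      D_anti_le hf (by omega)
    have hy_bound : |f^[T2] c - c| < preimDist f c (fibS k1) :=
      lt_of_lt_of_le (aux_bound hf t' i2 hchain2) hDle
    have happ : ∀ m : ℕ, K + 2 ≤ m →
        |f^[T2 + fibS m] c - c| < preimDist f c (fibS k1) := by
      intro m hm
      have hchainapp : List.Chain' (fun a b => a + 2 ≤ b) ((i2+2) :: (t' ++ [m])) := by
        have : (i2+2) :: (t' ++ [m]) = ((i2+2) :: t') ++ [m] := by simp
        rw [this]; show List.IsChain _ _; rw [List.isChain_append]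
        refine ⟨hchain2, List.isChain_singleton m, ?_⟩
        intro x hx y hy
        simp only [List.head?_cons, Option.mem_def, Option.some_inj] at hy
        rw [hK2] at hx
        simp only [Option.mem_def, Option.some_inj] at hx
        subst hx; subst hy
        omega
      have := aux_bound hf (t' ++ [m]) i2 hchainapp
      have hsum2 : (((i2+2) :: (t' ++ [m])).map fibS).sum = T2 + fibS m := by
        have : (i2+2) :: (t' ++ [m]) = ((i2+2) :: t') ++ [m] := by simp
        rw [this, List.map_append, List.sum_append, hT2]
        simp
      rw [hsum2] at this
      exact lt_of_lt_of_le this hDle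
    have hx_bound := happ j hj
    have hx'_bound := happ j' (by omega)
    -- rewrite targets
    have e0 : fibS k1 + T2 = ((k1 :: (i2+2) :: t').map fibS).sum := hsum.symm
    have ej : fibS k1 + (T2 + fibS j) = ((k1 :: (i2+2) :: t').map fibS).sum + fibS j := by
      rw [hsum]; omega
    have ej' : fibS k1 + (T2 + fibS j') = ((k1 :: (i2+2) :: t').map fibS).sum + fibS j' := by
      rw [hsum]; omega
    have hlen : (k1 :: (i2+2) :: t').length = ((i2+2) :: t').length + 1 := rfl
    rcases Nat.even_or_odd ((i2+2) :: t').length with hpar | hpar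
    · -- tail even ⟹ whole list odd
      obtain ⟨hIH1, hIH2⟩ := (hIH.2 hpar)
      -- positions: c < ỹ < x̃' < x̃
      have hw1 := win hf k1 (x := c + |f^[T2 + fibS j'] c - c|)
        (y := c + |f^[T2 + fibS j] c - c|) (by linarith) (by linarith) (by linarith)
      have hw2 := win hf k1 (x := c + |f^[T2] c - c|)
        (y := c + |f^[T2 + fibS j'] c - c|) (by linarith) (by linarith) (by linarith)
      rw [reflect_iterate hf (fibS k1) (T2 + fibS j) (one_le_fibS _),
        reflect_iterate hf (fibS k1) (T2 + fibS j') (one_le_fibS _)] at hw1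
      rw [reflect_iterate hf (fibS k1) (T2 + fibS j') (one_le_fibS _),
        reflect_iterate hf (fibS k1) T2 (one_le_fibS _)] at hw2
      rw [ej, ej'] at hw1
      rw [ej', e0] at hw2
      constructor
      · intro _; exact ⟨hw1, hw2⟩
      · intro hcon
        exfalso
        rw [hlen, Nat.even_add_one] at hcon
        exact hcon hpar
    · -- tail odd ⟹ whole list even
      obtain ⟨hIH1, hIH2⟩ := (hIH.1 hpar)
      -- positions: c < x̃ < x̃' < ỹ
      have hw1 := win hf k1 (x := c + |f^[T2 + fibS j] c - c|)
        (y := c + |f^[T2 + fibS j'] c - c|) (by linarith) (by linarith) (by linarith)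
      have hw2 := win hf k1 (x := c + |f^[T2 + fibS j'] c - c|)
        (y := c + |f^[T2] c - c|) (by linarith) (by linarith) (by linarith)
      rw [reflect_iterate hf (fibS k1) (T2 + fibS j) (one_le_fibS _),
        reflect_iterate hf (fibS k1) (T2 + fibS j') (one_le_fibS _)] at hw1
      rw [reflect_iterate hf (fibS k1) (T2 + fibS j') (one_le_fibS _),
        reflect_iterate hf (fibS k1) T2 (one_le_fibS _)] at hw2
      rw [ej, ej'] at hw1
      rw [ej', e0] at hw2
      constructor
      · intro hcon
        exfalso
        rw [hlen, Nat.odd_add_one] at hcon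
        exact hcon hpar
      · intro _; exact ⟨hw2, hw1⟩

end

end FibDev

/-- For a Fibonacci map, if `S = S_{k₁} + ⋯ + S_{k_{i₀}}` is a Fibonacci sum expression
and `k_{i₀} + 2 ≤ j < j'`, then `|c_{S+S_j}| < |c_{S+S_{j'}}| < |c_S|` when `i₀` is odd,
and the inequalities are reversed when `i₀` is even. -/
theorem fibonacci_orbit_ordering_same_leading_block (f : ℝ → ℝ) (c : ℝ)
    (hf : IsFibonacciMap f c) (S kl j j' : ℕ) (l : List ℕ)
    (hl : IsFibExpansion l S) (hlast : l.getLast? = some kl)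
    (hj : kl + 2 ≤ j) (hjj' : j < j') :
    (Odd l.length →
      |f^[S + fibS j] c - c| < |f^[S + fibS j'] c - c| ∧
      |f^[S + fibS j'] c - c| < |f^[S] c - c|) ∧
    (Even l.length →
      |f^[S] c - c| < |f^[S + fibS j'] c - c| ∧
      |f^[S + fibS j'] c - c| < |f^[S + fibS j] c - c|) := by
  obtain ⟨hne, hchain, hsum⟩ := hl
  obtain ⟨k1, t, rfl⟩ : ∃ k1 t, l = k1 :: t := by
    cases l with
    | nil => exact absurd rfl hne
    | cons a b => exact ⟨a, b, rfl⟩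
  have := FibDev.main_ind hf t k1 hchain kl hlast j j' hj hjj'
  rwa [hsum] at this
end
end

section
/- Let f be a Fibonacci map. If a positive integer m has Fibonacci sum expression with leading summand S_n, and m ≠ S_n and m ≠ S_n+S_{n+2}, then c_m = f^m(c) lies strictly between d_n = f^{S_n}(c) and y_n = f^{S_n+S_{n+2}}(c) (both of which lie on the same side of c). -/
noncomputable section

open Set Function

/-! ### fibS basics -/

lemma fibS_pos : ∀ n, 0 < fibS n
  | 0 => one_pos
  | 1 => two_pos
  | n + 2 => Nat.add_pos_left (fibS_pos (n + 1)) _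

lemma fibS_lt_succ : ∀ n, fibS n < fibS (n + 1)
  | 0 => by norm_num [fibS]
  | n + 1 => by
      have := fibS_pos n
      show fibS (n+1) < fibS (n+1) + fibS n
      omega

lemma fibS_strictMono : StrictMono fibS := strictMono_nat_of_lt_succ fibS_lt_succ

lemma fibS_succ_eq : ∀ n, fibS (n + 1) = fibS n + fibS (n - 1)
  | 0 => rfl
  | n + 1 => rfl

lemma fibS_one_le (n : ℕ) : 1 ≤ fibS n := fibS_pos n

/-! ### unimodal basics -/

variable {f : ℝ → ℝ} {c : ℝ}

lemma c_half (hf : IsFibonacciMap f c) : c = 1 / 2 := by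
  obtain ⟨⟨hcont, hmaps, hf0, hf1, hc, hmono, hanti⟩, hsym, hcut⟩ := hf
  obtain ⟨hc0, hc1⟩ := hc
  by_contra hne
  rcases lt_or_gt_of_ne hne with h | h
  · have h0 : (0:ℝ) ∈ Icc (0:ℝ) 1 := by norm_num
    have h2c : 2 * c - 0 ∈ Icc (0:ℝ) 1 := ⟨by linarith, by linarith⟩
    have he := hsym 0 h0 h2c
    rw [hf0] at he
    have hlt : f 1 < f (2 * c - 0) :=
      hanti (by constructor <;> linarith) (by constructor <;> linarith) (by linarith)
    rw [he, hf1] at hlt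
    exact lt_irrefl _ hlt
  · have h1 : (1:ℝ) ∈ Icc (0:ℝ) 1 := by norm_num
    have h2c : 2 * c - 1 ∈ Icc (0:ℝ) 1 := ⟨by linarith, by linarith⟩
    have he := hsym 1 h1 h2c
    rw [hf1] at he
    have hlt : f 0 < f (2 * c - 1) :=
      hmono (by constructor <;> linarith) (by constructor <;> linarith) (by linarith)
    rw [he, hf0] at hlt
    exact lt_irrefl _ hlt

lemma mirror_mem (hf : IsFibonacciMap f c) {x : ℝ} (hx : x ∈ Icc (0:ℝ) 1) :
    2 * c - x ∈ Icc (0:ℝ) 1 := by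
  rw [c_half hf]
  obtain ⟨h1, h2⟩ := hx
  constructor <;> [linarith; linarith]

lemma f_sym (hf : IsFibonacciMap f c) {x : ℝ} (hx : x ∈ Icc (0:ℝ) 1) :
    f (2 * c - x) = f x := hf.2.1 x hx (mirror_mem hf hx)

lemma c_mem (hf : IsFibonacciMap f c) : c ∈ Icc (0:ℝ) 1 := by
  rw [c_half hf]; norm_num

lemma iter_maps (hf : IsFibonacciMap f c) (k : ℕ) :
    MapsTo (f^[k]) (Icc (0:ℝ) 1) (Icc (0:ℝ) 1) := hf.1.2.1.iterate k

lemma iter_cont (hf : IsFibonacciMap f c) (k : ℕ) :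
    ContinuousOn (f^[k]) (Icc (0:ℝ) 1) := by
  induction k with
  | zero => simpa using continuousOn_id
  | succ k ih =>
      rw [Function.iterate_succ']
      exact hf.1.1.comp ih (iter_maps hf k)

lemma iter_sym (hf : IsFibonacciMap f c) {k : ℕ} (hk : 1 ≤ k) {x : ℝ}
    (hx : x ∈ Icc (0:ℝ) 1) : f^[k] (2 * c - x) = f^[k] x := by
  obtain ⟨k, rfl⟩ := Nat.exists_eq_add_of_le hk
  rw [add_comm, Function.iterate_add_apply, Function.iterate_add_apply]
  simp only [Function.iterate_one]
  rw [f_sym hf hx]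

/-! ### preimDist basics -/

lemma preimDist_nonneg (f : ℝ → ℝ) (c : ℝ) (k : ℕ) : 0 ≤ preimDist f c k :=
  Real.sInf_nonneg (by rintro y ⟨x, _, rfl⟩; exact abs_nonneg _)

lemma preimDist_le {k : ℕ} {x : ℝ} (hx : x ∈ Icc (0:ℝ) 1) (hfx : f^[k] x = c) :
    preimDist f c k ≤ |x - c| :=
  csInf_le ⟨0, by rintro y ⟨z, _, rfl⟩; exact abs_nonneg _⟩ ⟨x, ⟨hx, hfx⟩, rfl⟩

lemma delta_lt (hf : IsFibonacciMap f c) (i : ℕ) :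
    preimDist f c (fibS (i + 1)) < preimDist f c (fibS i) := (hf.2.2.2 i).1.2.2

lemma delta_pos (hf : IsFibonacciMap f c) (i : ℕ) : 0 < preimDist f c (fibS i) :=
  lt_of_le_of_lt (preimDist_nonneg f c (fibS (i + 1))) (delta_lt hf i)

lemma delta_le (hf : IsFibonacciMap f c) {i j : ℕ} (h : i ≤ j) :
    preimDist f c (fibS j) ≤ preimDist f c (fibS i) := by
  induction j with
  | zero => simp_all
  | succ j ih =>
      rcases Nat.lt_or_ge i (j+1) with h' | h'
      · exact le_trans (delta_lt hf j).le (ih (Nat.lt_succ_iff.mp h'))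
      · have : i = j + 1 := le_antisymm h h'
        subst this; rfl

lemma A_nonempty (hf : IsFibonacciMap f c) (n : ℕ) :
    ({x | x ∈ Icc (0:ℝ) 1 ∧ f^[fibS n] x = c}).Nonempty := by
  cases n with
  | zero =>
      obtain ⟨z, hz, h2⟩ := (hf.2.2.2 0).1.2.1
      refine ⟨f z, hf.1.2.1 hz, ?_⟩
      show f^[fibS 0] (f z) = c
      rw [show fibS 0 = 1 from rfl]
      rw [← Function.iterate_succ_apply]
      exact h2
  | succ n => exact (hf.2.2.2 n).1.2.1

lemma not_small (hf : IsFibonacciMap f c) {i k : ℕ} (h1 : fibS i ≤ k)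
    (h2 : k < fibS (i + 1)) {x : ℝ} (hx : x ∈ Icc (0:ℝ) 1) (hfx : f^[k] x = c) :
    preimDist f c (fibS i) ≤ |x - c| := by
  by_contra h
  push_neg at h
  have hklt : preimDist f c k < preimDist f c (fibS i) :=
    lt_of_le_of_lt (preimDist_le hx hfx) h
  have : fibS (i + 1) ≤ k := (hf.2.2.2 i).2 ⟨h1, ⟨x, hx, hfx⟩, hklt⟩
  omega

lemma distLB (hf : IsFibonacciMap f c) (i : ℕ) : ∀ k, 1 ≤ k → k < fibS (i + 1) →
    ∀ x ∈ Icc (0:ℝ) 1, f^[k] x = c → preimDist f c (fibS i) ≤ |x - c| := by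
  induction i with
  | zero =>
      intro k hk1 hk2 x hx hfx
      have : k = 1 := by
        have e : fibS (0 + 1) = 2 := rfl
        omega
      subst this
      exact not_small hf (by rw [show fibS 0 = 1 from rfl]) (by rw [show fibS 1 = 2 from rfl]; omega) hx hfx
  | succ i ih =>
      intro k hk1 hk2 x hx hfx
      rcases Nat.lt_or_ge k (fibS (i + 1)) with h | h
      · exact le_trans (delta_lt hf i).le (ih k hk1 h x hx hfx)
      · exact not_small hf h hk2 hx hfx

lemma zeta (hf : IsFibonacciMap f c) (n : ℕ) :
    c + preimDist f c (fibS n) ∈ Icc (0:ℝ) 1 ∧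
    f^[fibS n] (c + preimDist f c (fibS n)) = c := by
  set k := fibS n with hk
  set A := {x | x ∈ Icc (0:ℝ) 1 ∧ f^[k] x = c} with hA
  have hAne : A.Nonempty := A_nonempty hf n
  have hclosed : IsClosed A := by
    have : A = Icc (0:ℝ) 1 ∩ (f^[k]) ⁻¹' {c} := by
      ext x; simp [hA, Set.mem_inter_iff]
    rw [this]
    exact (iter_cont hf k).preimage_isClosed_of_isClosed isClosed_Icc isClosed_singleton
  have hcompact : IsCompact A :=
    isCompact_Icc.of_isClosed_subset hclosed (fun x hx => hx.1)
  obtain ⟨z, hzA, hmin⟩ := hcompact.exists_isMinOn hAne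
    (continuous_abs.comp (continuous_id.sub continuous_const)).continuousOn
  have heq : preimDist f c k = |z - c| := by
    refine le_antisymm (preimDist_le hzA.1 hzA.2) ?_
    refine le_csInf ⟨_, ⟨z, hzA, rfl⟩⟩ ?_
    rintro y ⟨w, hwA, rfl⟩
    exact hmin hwA
  rcases le_or_gt c z with h | h
  · have : c + preimDist f c k = z := by rw [heq, abs_of_nonneg (by linarith)]; ring
    rw [this]; exact ⟨hzA.1, hzA.2⟩
  · have hzm : c + preimDist f c k = 2 * c - z := by
      rw [heq, abs_of_neg (by linarith)]; ring
    rw [hzm]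
    exact ⟨mirror_mem hf hzA.1, by rw [iter_sym hf (fibS_one_le n) hzA.1]; exact hzA.2⟩

/-! ### monotonicity of iterates on intervals avoiding precritical points -/

lemma f_branch (hf : IsFibonacciMap f c) {a b : ℝ} (ha : a ∈ Icc (0:ℝ) 1)
    (hb : b ∈ Icc (0:ℝ) 1) (hcab : c ∉ Ioo a b) :
    StrictMonoOn f (Icc a b) ∨ StrictAntiOn f (Icc a b) := by
  rcases le_or_gt b c with h | h
  · exact Or.inl (hf.1.2.2.2.2.2.1.mono
      (fun x hx => ⟨le_trans ha.1 hx.1, le_trans hx.2 h⟩))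
  · rcases le_or_gt c a with h' | h'
    · exact Or.inr (hf.1.2.2.2.2.2.2.mono
        (fun x hx => ⟨le_trans h' hx.1, le_trans hx.2 hb.2⟩))
    · exact absurd ⟨h', h⟩ hcab

lemma monoM (hf : IsFibonacciMap f c) (k : ℕ) : ∀ a b : ℝ, a ∈ Icc (0:ℝ) 1 →
    b ∈ Icc (0:ℝ) 1 → a ≤ b → (∀ j, j < k → ∀ x ∈ Ioo a b, f^[j] x ≠ c) →
    StrictMonoOn (f^[k]) (Icc a b) ∨ StrictAntiOn (f^[k]) (Icc a b) := by
  induction k with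
  | zero =>
      intro a b _ _ _ _
      exact Or.inl (by simpa using strictMonoOn_id (s := Icc a b))
  | succ k ih =>
      intro a b ha hb hab hcrit
      have hc0 : c ∉ Ioo a b := fun hx => hcrit 0 (Nat.succ_pos k) c hx rfl
      have hsub : Icc a b ⊆ Icc (0:ℝ) 1 := Icc_subset_Icc ha.1 hb.2
      have hcont : ContinuousOn f (Icc a b) := hf.1.1.mono hsub
      have hiter : ∀ s : Set ℝ, StrictMonoOn (f^[k] ∘ f) s → StrictMonoOn (f^[k+1]) s := by
        intro s h
        rw [Function.iterate_succ]
        exact h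
      have hiter' : ∀ s : Set ℝ, StrictAntiOn (f^[k] ∘ f) s → StrictAntiOn (f^[k+1]) s := by
        intro s h
        rw [Function.iterate_succ]
        exact h
      rcases f_branch hf ha hb hc0 with hm | hm
    -- increasing branch
      · have hfab : f a ≤ f b :=
          hm.monotoneOn (left_mem_Icc.mpr hab) (right_mem_Icc.mpr hab) hab
        have hmapsTo : MapsTo f (Icc a b) (Icc (f a) (f b)) := by
          intro x hx
          exact ⟨hm.monotoneOn (left_mem_Icc.mpr hab) hx hx.1,
                 hm.monotoneOn hx (right_mem_Icc.mpr hab) hx.2⟩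
        have hfa : f a ∈ Icc (0:ℝ) 1 := hf.1.2.1 ha
        have hfb : f b ∈ Icc (0:ℝ) 1 := hf.1.2.1 hb
        have hcrit' : ∀ j, j < k → ∀ y ∈ Ioo (f a) (f b), f^[j] y ≠ c := by
          intro j hj y hy
          obtain ⟨x, hx, hfx⟩ := intermediate_value_Icc hab hcont (Ioo_subset_Icc_self hy)
          have hxa : a < x := by
            rcases eq_or_lt_of_le hx.1 with h | h
            · exfalso; rw [← h] at hfx; rw [hfx] at hy; exact lt_irrefl _ hy.1
            · exact h
          have hxb : x < b := by
            rcases eq_or_lt_of_le hx.2 with h | h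
            · exfalso; rw [h] at hfx; rw [hfx] at hy; exact lt_irrefl _ hy.2
            · exact h
          rw [← hfx, ← Function.iterate_succ_apply]
          exact hcrit (j+1) (Nat.succ_lt_succ hj) x ⟨hxa, hxb⟩
        rcases ih (f a) (f b) hfa hfb hfab hcrit' with h2 | h2
        · exact Or.inl (hiter _ (h2.comp hm hmapsTo))
        · exact Or.inr (hiter' _ (h2.comp_strictMonoOn hm hmapsTo))
    -- decreasing branch
      · have hfab : f b ≤ f a :=
          hm.antitoneOn (left_mem_Icc.mpr hab) (right_mem_Icc.mpr hab) hab
        have hmapsTo : MapsTo f (Icc a b) (Icc (f b) (f a)) := by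
          intro x hx
          exact ⟨hm.antitoneOn hx (right_mem_Icc.mpr hab) hx.2,
                 hm.antitoneOn (left_mem_Icc.mpr hab) hx hx.1⟩
        have hfa : f a ∈ Icc (0:ℝ) 1 := hf.1.2.1 ha
        have hfb : f b ∈ Icc (0:ℝ) 1 := hf.1.2.1 hb
        have hcrit' : ∀ j, j < k → ∀ y ∈ Ioo (f b) (f a), f^[j] y ≠ c := by
          intro j hj y hy
          obtain ⟨x, hx, hfx⟩ := intermediate_value_Icc' hab hcont (Ioo_subset_Icc_self hy)
          have hxa : a < x := by
            rcases eq_or_lt_of_le hx.1 with h | h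
            · exfalso; rw [← h] at hfx; rw [hfx] at hy; exact lt_irrefl _ hy.2
            · exact h
          have hxb : x < b := by
            rcases eq_or_lt_of_le hx.2 with h | h
            · exfalso; rw [h] at hfx; rw [hfx] at hy; exact lt_irrefl _ hy.1
            · exact h
          rw [← hfx, ← Function.iterate_succ_apply]
          exact hcrit (j+1) (Nat.succ_lt_succ hj) x ⟨hxa, hxb⟩
        rcases ih (f b) (f a) hfb hfa hfab hcrit' with h2 | h2
        · exact Or.inr (h2.comp_strictAntiOn hm hmapsTo |> hiter' _)
        · exact Or.inl (h2.comp hm hmapsTo |> hiter _)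

/-- strict monotonicity of `f^[S_n]` on `[c, c + δ_n]`. -/
lemma core (hf : IsFibonacciMap f c) (n : ℕ) :
    StrictMonoOn (f^[fibS n]) (Icc c (c + preimDist f c (fibS n))) ∨
    StrictAntiOn (f^[fibS n]) (Icc c (c + preimDist f c (fibS n))) := by
  have hz := zeta hf n
  refine monoM hf (fibS n) c _ (c_mem hf) hz.1 (by linarith [delta_pos hf n]) ?_
  intro j hj x hx hfx
  cases j with
  | zero =>
      simp only [Function.iterate_zero, id_eq] at hfx
      exact absurd hfx (ne_of_gt hx.1)
  | succ j =>
      cases n with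
      | zero => exact absurd hj (by rw [show fibS 0 = 1 from rfl]; omega)
      | succ n =>
          have hxm : x ∈ Icc (0:ℝ) 1 := by
            have h1 := (c_mem hf).1
            have h2 := hz.1.2
            exact ⟨by linarith [hx.1.le], by linarith [hx.2.le]⟩
          have hlb := distLB hf n (j+1) (Nat.succ_le_succ (Nat.zero_le j)) hj x hxm hfx
          have h1 : |x - c| < preimDist f c (fibS (n+1)) := by
            rw [abs_of_pos (by linarith [hx.1])]
            linarith [hx.2, hx.1]
          have h2 : preimDist f c (fibS (n+1)) < preimDist f c (fibS n) := delta_lt hf n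
          linarith

/-! ### uIoo helpers -/

lemma mem_uIoo_cases {u v w : ℝ} (h : w ∈ uIoo u v) :
    (u < w ∧ w < v) ∨ (v < w ∧ w < u) := by
  rw [uIoo, mem_Ioo] at h
  rcases le_total u v with hh | hh
  · rw [inf_eq_left.2 hh, sup_eq_right.2 hh] at h; exact Or.inl h
  · rw [inf_eq_right.2 hh, sup_eq_left.2 hh] at h; exact Or.inr ⟨h.1, h.2⟩

lemma mem_uIoo_of {u v w : ℝ} (h1 : u < w) (h2 : w < v) : w ∈ uIoo u v := by
  rw [uIoo, mem_Ioo]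
  exact ⟨lt_of_le_of_lt inf_le_left h1, lt_of_lt_of_le h2 le_sup_right⟩

lemma dist_lemma0 {c a y : ℝ} (hy : y ∈ uIoo c a) : y ≠ c ∧ |y - c| < |a - c| := by
  rcases mem_uIoo_cases hy with ⟨h1, h2⟩ | ⟨h1, h2⟩
  · refine ⟨ne_of_gt h1, ?_⟩
    rw [abs_of_pos (by linarith), abs_of_pos (by linarith)]; linarith
  · refine ⟨ne_of_lt h2, ?_⟩
    rw [abs_of_neg (by linarith), abs_of_neg (by linarith)]; linarith

lemma dist_lemma {c a x y : ℝ} (hy : y ∈ uIoo c a) (hx : x ∈ uIoo a y) :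
    x ≠ c ∧ |x - c| < |a - c| := by
  rcases mem_uIoo_cases hy with ⟨h1, h2⟩ | ⟨h1, h2⟩ <;>
    rcases mem_uIoo_cases hx with ⟨g1, g2⟩ | ⟨g1, g2⟩
  · exfalso; linarith
  · refine ⟨ne_of_gt (by linarith), ?_⟩
    rw [abs_of_pos (by linarith), abs_of_pos (by linarith)]; linarith
  · refine ⟨ne_of_lt (by linarith), ?_⟩
    rw [abs_of_neg (by linarith), abs_of_neg (by linarith)]; linarith
  · exfalso; linarith

/-! ### sandwich lemma -/

lemma sandwich (hf : IsFibonacciMap f c) (n : ℕ) {x y : ℝ}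
    (hx : x ∈ Icc (0:ℝ) 1) (hy : y ∈ Icc (0:ℝ) 1) (hne : x ≠ c)
    (h1 : |x - c| < |y - c|) (h2 : |y - c| ≤ preimDist f c (fibS n)) :
    f^[fibS n] x ∈ uIoo (f^[fibS n] c) (f^[fibS n] y) := by
  set δ := preimDist f c (fibS n) with hδ
  have hδpos : 0 < δ := delta_pos hf n
  have h0 : 0 < |x - c| := abs_pos.2 (sub_ne_zero.2 hne)
  have hgx : f^[fibS n] (c + |x - c|) = f^[fibS n] x := by
    rcases le_or_gt c x with h | h
    · rw [abs_of_nonneg (by linarith)]; ring_nf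
    · have hx' : c + |x - c| = 2 * c - x := by rw [abs_of_neg (by linarith)]; ring
      rw [hx', iter_sym hf (fibS_one_le n) hx]
  have hgy : f^[fibS n] (c + |y - c|) = f^[fibS n] y := by
    rcases le_or_gt c y with h | h
    · rw [abs_of_nonneg (by linarith)]; ring_nf
    · have hy' : c + |y - c| = 2 * c - y := by rw [abs_of_neg (by linarith)]; ring
      rw [hy', iter_sym hf (fibS_one_le n) hy]
  have hx'm : c + |x - c| ∈ Icc c (c + δ) := ⟨by linarith, by linarith⟩
  have hy'm : c + |y - c| ∈ Icc c (c + δ) := ⟨by linarith [abs_nonneg (y - c)], by linarith⟩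
  have hcm : c ∈ Icc c (c + δ) := ⟨le_rfl, by linarith⟩
  have hlt1 : c < c + |x - c| := by linarith
  have hlt2 : c + |x - c| < c + |y - c| := by linarith
  rcases core hf n with hm | hm
  · have e1 := hm hcm hx'm hlt1
    have e2 := hm hx'm hy'm hlt2
    rw [hgx] at e1 e2
    rw [hgy] at e2
    exact mem_uIoo_of e1 e2
  · have e1 := hm hcm hx'm hlt1
    have e2 := hm hx'm hy'm hlt2
    rw [hgx] at e1 e2
    rw [hgy] at e2
    rw [uIoo_comm]
    exact mem_uIoo_of e2 e1

/-! ### bounds on the closest returns dₙ -/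

lemma dlow (hf : IsFibonacciMap f c) (N : ℕ) :
    preimDist f c (fibS N) < |f^[fibS (N + 1)] c - c| := by
  have hz2 := zeta hf (N + 2)
  set ζ := c + preimDist f c (fibS (N + 2)) with hζ
  have hζ1 : c < ζ := by
    have := delta_pos hf (N + 2); linarith
  have hζ2 : ζ < c + preimDist f c (fibS (N + 1)) := by
    have := delta_lt hf (N + 1); linarith
  set w := f^[fibS (N + 1)] ζ with hw
  have hwc : f^[fibS N] w = c := by
    rw [hw, ← Function.iterate_add_apply]
    have : fibS N + fibS (N + 1) = fibS (N + 2) := by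
      show fibS N + fibS (N+1) = fibS (N+1) + fibS N; ring
    rw [this]
    exact hz2.2
  have hwmem : w ∈ Icc (0:ℝ) 1 := iter_maps hf (fibS (N + 1)) hz2.1
  have hlb : preimDist f c (fibS N) ≤ |w - c| :=
    distLB hf N (fibS N) (fibS_one_le N) (fibS_lt_succ N) w hwmem hwc
  -- w is strictly between c and d_{N+1}
  have hz1 := zeta hf (N + 1)
  have hζm : ζ ∈ Icc c (c + preimDist f c (fibS (N + 1))) := ⟨hζ1.le, hζ2.le⟩
  have hcm : c ∈ Icc c (c + preimDist f c (fibS (N + 1))) :=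
    ⟨le_rfl, by linarith [delta_pos hf (N + 1)]⟩
  have hem : c + preimDist f c (fibS (N + 1)) ∈ Icc c (c + preimDist f c (fibS (N + 1))) :=
    ⟨by linarith [delta_pos hf (N + 1)], le_rfl⟩
  rcases core hf (N + 1) with hm | hm
  · have e1 := hm hcm hζm hζ1
    have e2 := hm hζm hem hζ2
    rw [hz1.2] at e2
    -- d_{N+1} < w < c
    have : |w - c| < |f^[fibS (N + 1)] c - c| := by
      rw [abs_of_neg (by linarith), abs_of_neg (by linarith)]; linarith
    linarith
  · have e1 := hm hcm hζm hζ1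
    have e2 := hm hζm hem hζ2
    rw [hz1.2] at e2
    -- c < w < d_{N+1}
    have : |w - c| < |f^[fibS (N + 1)] c - c| := by
      rw [abs_of_pos (by linarith), abs_of_pos (by linarith)]; linarith
    linarith

lemma d_ne (hf : IsFibonacciMap f c) (N : ℕ) : f^[fibS (N + 1)] c ≠ c := by
  have h := dlow hf N
  have := delta_pos hf N
  intro he
  rw [he] at h
  simp at h
  linarith

lemma dup (hf : IsFibonacciMap f c) (N : ℕ) :
    |f^[fibS (N + 2)] c - c| < preimDist f c (fibS N) := by
  by_contra hcon
  push_neg at hcon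
  set g := f^[fibS (N + 2)] with hg
  set d := g c with hd
  set b := c + preimDist f c (fibS (N + 2)) with hb
  have hz2 := zeta hf (N + 2)
  have hzN := zeta hf N
  have hδN : 0 < preimDist f c (fibS N) := delta_pos hf N
  have hδ2 : 0 < preimDist f c (fibS (N + 2)) := delta_pos hf (N + 2)
  have hcb : c ≤ b := by rw [hb]; linarith
  have hsub : Icc c b ⊆ Icc (0:ℝ) 1 := Icc_subset_Icc (c_mem hf).1 hz2.1.2
  have hcont : ContinuousOn g (Icc c b) := (iter_cont hf (fibS (N + 2))).mono hsub
  have hdne : d ≠ c := d_ne hf (N + 1)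
  have hgb : g b = c := hz2.2
  have hfin : ∀ x ∈ Icc c b, g x = c + preimDist f c (fibS N) ∨
      g x = 2 * c - (c + preimDist f c (fibS N)) → False := by
    intro x hxm hgx
    have hpc : f^[fibS N] (g x) = c := by
      rcases hgx with h | h
      · rw [h]; exact hzN.2
      · rw [h, iter_sym hf (fibS_one_le N) hzN.1]; exact hzN.2
    have hfx : f^[fibS N + fibS (N + 2)] x = c := by
      rw [Function.iterate_add_apply]; exact hpc
    have hxb : x < b := by
      rcases eq_or_lt_of_le hxm.2 with h | h
      · exfalso
        rw [h, hgb] at hgx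
        rcases hgx with h2 | h2 <;> linarith
      · exact h
    have habsx : |x - c| < preimDist f c (fibS (N + 2)) := by
      rw [abs_of_nonneg (by linarith [hxm.1])]
      rw [hb] at hxb; linarith
    have hk2 : fibS N + fibS (N + 2) < fibS (N + 2 + 1) := by
      have h3 : fibS (N + 2 + 1) = fibS (N + 2) + fibS (N + 1) := rfl
      have h4 := fibS_lt_succ N
      omega
    have := not_small hf (Nat.le_add_left _ _) hk2 (hsub hxm) hfx
    linarith
  rcases lt_or_gt_of_ne hdne with hdc | hdc
  · -- d < c : use the left precritical point p = c - δ_N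
    set p := 2 * c - (c + preimDist f c (fibS N)) with hp
    have habs : |d - c| = c - d := by rw [abs_of_neg (by linarith : d - c < 0)]; ring
    have hpi : p ∈ Icc (g c) (g b) := by
      rw [hgb, ← hd, hp]
      constructor
      · rw [habs] at hcon; linarith
      · linarith
    obtain ⟨x, hxm, hgx⟩ := intermediate_value_Icc hcb hcont hpi
    exact hfin x hxm (Or.inr hgx)
  · -- c < d : use the right precritical point p = c + δ_N
    set p := c + preimDist f c (fibS N) with hp
    have habs : |d - c| = d - c := abs_of_pos (by linarith)
    have hpi : p ∈ Icc (g b) (g c) := by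
      rw [hgb, ← hd, hp]
      constructor
      · linarith
      · rw [habs] at hcon; linarith
    obtain ⟨x, hxm, hgx⟩ := intermediate_value_Icc' hcb hcont hpi
    exact hfin x hxm (Or.inl hgx)

/-! ### the points yₙ and the main induction -/

lemma y_eq (n : ℕ) : f^[fibS n + fibS (n + 2)] c = f^[fibS n] (f^[fibS (n + 2)] c) :=
  Function.iterate_add_apply f (fibS n) (fibS (n + 2)) c

lemma ylem (hf : IsFibonacciMap f c) (n : ℕ) :
    f^[fibS n + fibS (n + 2)] c ∈ uIoo c (f^[fibS n] c) := by
  have hd2 : f^[fibS (n + 2)] c ∈ Icc (0:ℝ) 1 := iter_maps hf (fibS (n + 2)) (c_mem hf)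
  have hne : f^[fibS (n + 2)] c ≠ c := d_ne hf (n + 1)
  have hz := zeta hf n
  have habs : |(c + preimDist f c (fibS n)) - c| = preimDist f c (fibS n) := by
    rw [abs_of_nonneg (by linarith [delta_pos hf n])]; ring
  have h1 : |f^[fibS (n + 2)] c - c| < |(c + preimDist f c (fibS n)) - c| := by
    rw [habs]; exact dup hf n
  have := sandwich hf n hd2 hz.1 hne h1 (le_of_eq habs)
  rw [hz.2] at this
  rw [y_eq, uIoo_comm]
  exact this

lemma mono_app (hf : IsFibonacciMap f c) (n : ℕ) {x : ℝ} (hx : x ∈ Icc (0:ℝ) 1)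
    (hne : x ≠ c) (h1 : |x - c| < |f^[fibS (n + 2)] c - c|) :
    f^[fibS n] x ∈ uIoo (f^[fibS n] c) (f^[fibS n + fibS (n + 2)] c) := by
  have hd2 : f^[fibS (n + 2)] c ∈ Icc (0:ℝ) 1 := iter_maps hf (fibS (n + 2)) (c_mem hf)
  have := sandwich hf n hx hd2 hne h1 (dup hf n).le
  rw [y_eq]
  exact this

lemma d_lt (hf : IsFibonacciMap f c) {n k : ℕ} (h : n + 3 ≤ k) :
    |f^[fibS k] c - c| < |f^[fibS (n + 2)] c - c| := by
  obtain ⟨j, rfl⟩ := Nat.exists_eq_add_of_le h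
  have e : n + 3 + j = (n + 1 + j) + 2 := by omega
  rw [e]
  calc |f^[fibS ((n + 1 + j) + 2)] c - c| < preimDist f c (fibS (n + 1 + j)) :=
        dup hf (n + 1 + j)
    _ ≤ preimDist f c (fibS (n + 1)) := delta_le hf (by omega)
    _ < |f^[fibS (n + 2)] c - c| := dlow hf (n + 1)

lemma d_le (hf : IsFibonacciMap f c) {n k : ℕ} (h : n + 2 ≤ k) :
    |f^[fibS k] c - c| ≤ |f^[fibS (n + 2)] c - c| := by
  rcases eq_or_lt_of_le h with h' | h'
  · rw [← h']
  · exact (d_lt hf h').le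

lemma d_ne' (hf : IsFibonacciMap f c) {k : ℕ} (h : 1 ≤ k) : f^[fibS k] c ≠ c := by
  obtain ⟨j, rfl⟩ := Nat.exists_eq_add_of_le h
  rw [add_comm]
  exact d_ne hf j

lemma keyB (hf : IsFibonacciMap f c) : ∀ (t : List ℕ) (n : ℕ),
    List.Chain' (fun a b => a + 2 ≤ b) (n :: t) →
    (t = [] ∧ f^[((n :: t).map fibS).sum] c = f^[fibS n] c) ∨
    (t = [n + 2] ∧ f^[((n :: t).map fibS).sum] c = f^[fibS n + fibS (n + 2)] c) ∨
    f^[((n :: t).map fibS).sum] c ∈ uIoo (f^[fibS n] c) (f^[fibS n + fibS (n + 2)] c) := by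
  intro t
  induction t with
  | nil => intro n _; exact Or.inl ⟨rfl, by simp⟩
  | cons k₂ t' ih =>
      intro n hch
      have hk : n + 2 ≤ k₂ := (List.isChain_cons_cons.mp hch).1
      have hch' : List.Chain' (fun a b => a + 2 ≤ b) (k₂ :: t') := (List.isChain_cons_cons.mp hch).2
      have hsum : ((n :: k₂ :: t').map fibS).sum = fibS n + ((k₂ :: t').map fibS).sum := by
        simp
      have hcm' : f^[((n :: k₂ :: t').map fibS).sum] c
          = f^[fibS n] (f^[((k₂ :: t').map fibS).sum] c) := by
        rw [hsum, Function.iterate_add_apply]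
      have hcmem : f^[((k₂ :: t').map fibS).sum] c ∈ Icc (0:ℝ) 1 :=
        iter_maps hf _ (c_mem hf)
      have hbound : (f^[((k₂ :: t').map fibS).sum] c ≠ c ∧
          |f^[((k₂ :: t').map fibS).sum] c - c| < |f^[fibS (n + 2)] c - c|) ∨
          (k₂ = n + 2 ∧ t' = []) := by
        rcases ih k₂ hch' with ⟨ht', heq⟩ | ⟨ht', heq⟩ | hmem
        · rcases eq_or_lt_of_le hk with hkk | hkk
          · exact Or.inr ⟨hkk.symm, ht'⟩
          · left
            rw [heq]
            exact ⟨d_ne' hf (by omega), d_lt hf hkk⟩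
        · left
          rw [heq]
          have hy := ylem hf k₂
          have hd := dist_lemma0 hy
          exact ⟨hd.1, lt_of_lt_of_le hd.2 (d_le hf hk)⟩
        · left
          have hy := ylem hf k₂
          have hd := dist_lemma hy hmem
          exact ⟨hd.1, lt_of_lt_of_le hd.2 (d_le hf hk)⟩
      rcases hbound with ⟨hne, hlt⟩ | ⟨hkk, ht'⟩
      · right; right
        rw [hcm']
        exact mono_app hf n hcmem hne hlt
      · right; left
        subst ht'; subst hkk
        refine ⟨rfl, ?_⟩
        rw [hcm']
        simp only [List.map_cons, List.map_nil, List.sum_cons, List.sum_nil, add_zero]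
        rw [y_eq]


/-- For a Fibonacci map, if `m` has Fibonacci sum expression with leading summand `S_n`,
and `m ≠ S_n`, `m ≠ S_n + S_{n+2}`, then `c_m = f^m(c)` lies strictly between
`d_n = f^{S_n}(c)` and `y_n = f^{S_n + S_{n+2}}(c)`, which lie on the same side of `c`. -/
theorem fibonacci_orbit_point_between_d_and_y (f : ℝ → ℝ) (c : ℝ)
    (hf : IsFibonacciMap f c) (m n : ℕ) (l : List ℕ)
    (hl : IsFibExpansion l m) (hn : l.head? = some n)
    (hm1 : m ≠ fibS n) (hm2 : m ≠ fibS n + fibS (n + 2)) :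
    (f^[fibS n] c - c) * (f^[fibS n + fibS (n + 2)] c - c) > 0 ∧
    f^[m] c ∈ Set.uIoo (f^[fibS n] c) (f^[fibS n + fibS (n + 2)] c) := by
  obtain ⟨hlne, hch, hsum⟩ := hl
  cases l with
  | nil => exact absurd rfl hlne
  | cons a t =>
      have ha : a = n := by
        simpa using hn
      subst ha
      constructor
      · have hy := ylem hf a
        rcases mem_uIoo_cases hy with ⟨h1, h2⟩ | ⟨h1, h2⟩
        · have : 0 < f^[fibS a] c - c := by linarith
          have h2' : 0 < f^[fibS a + fibS (a + 2)] c - c := by linarith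
          exact mul_pos this h2'
        · have : f^[fibS a] c - c < 0 := by linarith
          have h2' : f^[fibS a + fibS (a + 2)] c - c < 0 := by linarith
          exact mul_pos_of_neg_of_neg this h2'
      · rcases keyB hf t a hch with ⟨ht, _⟩ | ⟨ht, _⟩ | h
        · exfalso
          apply hm1
          rw [← hsum, ht]
          simp
        · exfalso
          apply hm2
          rw [← hsum, ht]
          simp
        · rw [← hsum]
          exact h
end
end
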